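/- arXiv:1904.12096 — 6 statements merged into one kernel-verified Lean document; each statement's English description precedes it below -/
import Mathlib

section
/- For a bounded linear operator T on a complex Hilbert space with polar decomposition T = U|T|, and for t ∈ [0, 1/2], the t-Aluthge transform satisfies ‖T̃_t‖ ≤ ‖T²‖^t · ‖T‖^{1-2t}. -/
open scoped NNReal ENNReal
open ContinuousLinearMap

set_option synthInstance.maxHeartbeats 1000000
set_option maxHeartbeats 1000000


variable {H : Type*} [NormedAddCommGroup H] [InnerProductSpace ℂ H] [CompleteSpace H]

/-- The numerical radius of a bounded linear operator. -/
noncomputable def numRadius (T : H →L[ℂ] H) : ℝ :=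
  ⨆ x : {x : H // ‖x‖ = 1}, ‖(inner ℂ (T x) x : ℂ)‖

/-- The modulus `|T| = (T*T)^{1/2}`. -/
noncomputable def opAbs (T : H →L[ℂ] H) : H →L[ℂ] H :=
  CFC.sqrt (adjoint T * T)

/-- The `t`-Aluthge transform `|T|^t U |T|^{1-t}` (with `|T|^0` the support
projection, i.e. `U*U` for the polar partial isometry `U`). -/
noncomputable def aluthge (T U : H →L[ℂ] H) (t : ℝ≥0) : H →L[ℂ] H :=
  CFC.nnrpow (opAbs T) t * U * CFC.nnrpow (opAbs T) (1 - t)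

section Abstract
open Filter
variable {A : Type*} [CStarAlgebra A] [PartialOrder A] [StarOrderedRing A]


omit [PartialOrder A] [StarOrderedRing A] in
lemma mySpecRad_biSup (z : A) :
    spectralRadius ℂ z = ⨆ k ∈ (spectrum ℂ z \ {0}), (‖k‖₊ : ℝ≥0∞) := by
  rw [spectralRadius]
  apply le_antisymm
  · refine iSup₂_le fun k hk => ?_
    rcases eq_or_ne k 0 with rfl | h
    · simp
    · exact le_iSup₂ (f := fun k (_ : k ∈ spectrum ℂ z \ {0}) => (‖k‖₊ : ℝ≥0∞)) k ⟨hk, h⟩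
  · exact iSup₂_le fun k hk =>
      le_iSup₂ (f := fun k (_ : k ∈ spectrum ℂ z) => (‖k‖₊ : ℝ≥0∞)) k hk.1

omit [PartialOrder A] [StarOrderedRing A] in
lemma mySpecRad_comm (x y : A) : spectralRadius ℂ (x * y) = spectralRadius ℂ (y * x) := by
  rw [mySpecRad_biSup, mySpecRad_biSup, spectrum.nonzero_mul_comm]

lemma myNnnorm_nonneg_eq_specRad {z : A} (hz : 0 ≤ z) :
    (‖z‖₊ : ℝ≥0∞) = spectralRadius ℂ z :=
  ((IsSelfAdjoint.of_nonneg hz).spectralRadius_eq_nnnorm).symm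

lemma myStar_nnrpow (a : A) (t : ℝ≥0) : star (a ^ t) = a ^ t :=
  (IsSelfAdjoint.of_nonneg CFC.nnrpow_nonneg).star_eq

-- the key midpoint inequality
lemma myKeySq [Nontrivial A] (a V : A) {s r m : ℝ≥0} (hs : 0 < s) (hr : 0 < r) (hm : 0 < m)
    (hsum : s + r = m + m) :
    ‖a ^ m * V * a ^ m‖₊ ^ 2 ≤ ‖a ^ s * V * a ^ s‖₊ * ‖a ^ r * V * a ^ r‖₊ := by
  set as := a ^ s with has
  set ar := a ^ r with har
  set am := a ^ m with ham
  have hstar_s : star as = as := myStar_nnrpow a s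
  have hstar_m : star am = am := myStar_nnrpow a m
  have hsr : as * ar = am * am := by
    rw [has, har, ham, ← CFC.nnrpow_add hs hr, ← CFC.nnrpow_add hm hm, hsum]
  have hrs : ar * as = am * am := by
    rw [has, har, ham, ← CFC.nnrpow_add hr hs, ← CFC.nnrpow_add hm hm, add_comm r s, hsum]
  set x := am * V * am with hx
  have h1 : ((‖x‖₊ ^ 2 : ℝ≥0) : ℝ≥0∞) = (‖star x * x‖₊ : ℝ≥0∞) := by
    rw [CStarRing.nnnorm_star_mul_self, sq]
  have hpos : (0 : A) ≤ star x * x := star_mul_self_nonneg x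
  have hVs : as * star V * as = star (as * V * as) := by
    rw [star_mul, star_mul, hstar_s]
    simp only [mul_assoc]
  have key : ((‖x‖₊ ^ 2 : ℝ≥0) : ℝ≥0∞)
      ≤ ((‖ar * V * ar‖₊ * ‖as * V * as‖₊ : ℝ≥0) : ℝ≥0∞) := by
    calc ((‖x‖₊ ^ 2 : ℝ≥0) : ℝ≥0∞) = (‖star x * x‖₊ : ℝ≥0∞) := h1
    _ = spectralRadius ℂ (star x * x) := myNnnorm_nonneg_eq_specRad hpos
    _ = spectralRadius ℂ (am * (star V * (am * (am * (V * am))))) := by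
        congr 1
        rw [hx, star_mul, star_mul, hstar_m]
        simp only [mul_assoc]
    _ = spectralRadius ℂ ((star V * (am * (am * (V * am)))) * am) := mySpecRad_comm _ _
    _ = spectralRadius ℂ ((star V * as) * (ar * (V * (ar * as)))) := by
        congr 1
        calc (star V * (am * (am * (V * am)))) * am
            = star V * ((am * am) * (V * (am * am))) := by simp only [mul_assoc]
          _ = star V * ((as * ar) * (V * (ar * as))) := by rw [hsr, hrs]
          _ = (star V * as) * (ar * (V * (ar * as))) := by simp only [mul_assoc]
    _ = spectralRadius ℂ ((ar * (V * (ar * as))) * (star V * as)) := mySpecRad_comm _ _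
    _ = spectralRadius ℂ ((ar * V * ar) * (as * star V * as)) := by
        congr 1
        simp only [mul_assoc]
    _ ≤ (‖(ar * V * ar) * (as * star V * as)‖₊ : ℝ≥0∞) := spectrum.spectralRadius_le_nnnorm _
    _ ≤ ((‖ar * V * ar‖₊ * ‖as * star V * as‖₊ : ℝ≥0) : ℝ≥0∞) := by
        exact_mod_cast ENNReal.coe_le_coe.mpr (nnnorm_mul_le _ _)
    _ = ((‖ar * V * ar‖₊ * ‖as * V * as‖₊ : ℝ≥0) : ℝ≥0∞) := by
        rw [hVs, nnnorm_star]
  have h2 := ENNReal.coe_le_coe.mp key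
  calc ‖x‖₊ ^ 2 ≤ ‖ar * V * ar‖₊ * ‖as * V * as‖₊ := h2
    _ = ‖as * V * as‖₊ * ‖ar * V * ar‖₊ := mul_comm _ _

-- degenerate midpoint with V at the endpoint
lemma myKeySq0 [Nontrivial A] (a V : A) {r m : ℝ≥0} (hm : 0 < m) (hsum : r = m + m) :
    ‖a ^ m * V * a ^ m‖₊ ^ 2 ≤ ‖V‖₊ * ‖a ^ r * V * a ^ r‖₊ := by
  set ar := a ^ r with har
  set am := a ^ m with ham
  have hstar_m : star am = am := myStar_nnrpow a m
  have hmm : am * am = ar := by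
    rw [har, ham, ← CFC.nnrpow_add hm hm, hsum]
  set x := am * V * am with hx
  have h1 : ((‖x‖₊ ^ 2 : ℝ≥0) : ℝ≥0∞) = (‖star x * x‖₊ : ℝ≥0∞) := by
    rw [CStarRing.nnnorm_star_mul_self, sq]
  have hpos : (0 : A) ≤ star x * x := star_mul_self_nonneg x
  have key : ((‖x‖₊ ^ 2 : ℝ≥0) : ℝ≥0∞) ≤ ((‖V‖₊ * ‖ar * V * ar‖₊ : ℝ≥0) : ℝ≥0∞) := by
    calc ((‖x‖₊ ^ 2 : ℝ≥0) : ℝ≥0∞) = (‖star x * x‖₊ : ℝ≥0∞) := h1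
    _ = spectralRadius ℂ (star x * x) := myNnnorm_nonneg_eq_specRad hpos
    _ = spectralRadius ℂ (am * (star V * (am * (am * (V * am))))) := by
        congr 1
        rw [hx, star_mul, star_mul, hstar_m]
        simp only [mul_assoc]
    _ = spectralRadius ℂ ((star V * (am * (am * (V * am)))) * am) := mySpecRad_comm _ _
    _ = spectralRadius ℂ (star V * (ar * V * ar)) := by
        congr 1
        calc (star V * (am * (am * (V * am)))) * am
            = star V * ((am * am) * (V * (am * am))) := by simp only [mul_assoc]
          _ = star V * (ar * (V * ar)) := by rw [hmm]
          _ = star V * (ar * V * ar) := by simp only [mul_assoc]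
    _ ≤ (‖star V * (ar * V * ar)‖₊ : ℝ≥0∞) := spectrum.spectralRadius_le_nnnorm _
    _ ≤ ((‖star V‖₊ * ‖ar * V * ar‖₊ : ℝ≥0) : ℝ≥0∞) := by
        exact_mod_cast ENNReal.coe_le_coe.mpr (nnnorm_mul_le _ _)
    _ = ((‖V‖₊ * ‖ar * V * ar‖₊ : ℝ≥0) : ℝ≥0∞) := by rw [nnnorm_star]
  exact ENNReal.coe_le_coe.mp key


noncomputable def gfun (a V : A) (s : ℝ≥0) : ℝ≥0 :=
  if s = 0 then ‖V‖₊ else ‖a ^ s * V * a ^ s‖₊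

lemma gfun_zero (a V : A) : gfun a V 0 = ‖V‖₊ := by simp [gfun]

lemma gfun_pos (a V : A) {s : ℝ≥0} (hs : 0 < s) : gfun a V s = ‖a ^ s * V * a ^ s‖₊ := by
  simp [gfun, hs.ne']

lemma gfun_midpoint [Nontrivial A] (a V : A) (s r : ℝ≥0) :
    gfun a V ((s + r) / 2) ^ 2 ≤ gfun a V s * gfun a V r := by
  have h2 : ∀ u : ℝ≥0, u / 2 + u / 2 = u := fun u => by
    rw [← add_div, ← two_mul, mul_div_cancel_left₀ _ (two_ne_zero)]
  rcases eq_or_lt_of_le (zero_le : 0 ≤ s) with hs | hs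
  · rcases eq_or_lt_of_le (zero_le : 0 ≤ r) with hr | hr
    · simp [← hs, ← hr, gfun_zero, sq]
    · -- s = 0, r > 0
      rw [← hs, zero_add, gfun_zero, gfun_pos a V hr, gfun_pos a V (by positivity : 0 < r / 2)]
      exact myKeySq0 a V (by positivity) (h2 r).symm
  · rcases eq_or_lt_of_le (zero_le : 0 ≤ r) with hr | hr
    · rw [← hr, add_zero, gfun_zero, gfun_pos a V hs, gfun_pos a V (by positivity : 0 < s / 2)]
      rw [mul_comm]
      exact myKeySq0 a V (by positivity) (h2 s).symm
    · rw [gfun_pos a V hs, gfun_pos a V hr, gfun_pos a V (by positivity : 0 < (s + r) / 2)]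
      exact myKeySq a V hs hr (by positivity) (h2 (s + r)).symm

lemma gfun_dyadic [Nontrivial A] (a V : A) :
    ∀ n k : ℕ, k ≤ 2 ^ n →
      gfun a V ((k : ℝ≥0) / 2 ^ n) ≤
        gfun a V 1 ^ ((k : ℝ) / 2 ^ n) * gfun a V 0 ^ (1 - (k : ℝ) / 2 ^ n) := by
  intro n
  induction n with
  | zero =>
    intro k hk
    interval_cases k
    · simp [gfun_zero]
    · simp
  | succ n ih =>
    intro k hk
    have h2n : (2 : ℕ) ^ (n + 1) = 2 * 2 ^ n := by ring
    rcases Nat.even_or_odd k with ⟨m, rfl⟩ | ⟨m, rfl⟩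
    · -- even
      have hm : m ≤ 2 ^ n := by omega
      have e1 : ((m + m : ℕ) : ℝ≥0) / 2 ^ (n + 1) = (m : ℝ≥0) / 2 ^ n := by
        push_cast
        rw [pow_succ]
        rw [div_eq_div_iff (by positivity) (by positivity)]
        ring
      have e2 : ((m + m : ℕ) : ℝ) / 2 ^ (n + 1) = (m : ℝ) / 2 ^ n := by
        push_cast
        rw [pow_succ]
        field_simp
        ring
      rw [e1, e2]
      exact ih m hm
    · -- odd : k = 2*m+1
      have hm1 : m + 1 ≤ 2 ^ n := by omega
      have hm : m ≤ 2 ^ n := by omega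
      set α := (m : ℝ) / 2 ^ n with hα
      set β := ((m + 1 : ℕ) : ℝ) / 2 ^ n with hβ
      set γ := ((2 * m + 1 : ℕ) : ℝ) / 2 ^ (n + 1) with hγ
      have hαβγ : α + β = 2 * γ := by
        rw [hα, hβ, hγ]
        push_cast
        rw [pow_succ]
        field_simp
        ring
      have hmid : ((2 * m + 1 : ℕ) : ℝ≥0) / 2 ^ (n + 1)
          = ((m : ℝ≥0) / 2 ^ n + ((m + 1 : ℕ) : ℝ≥0) / 2 ^ n) / 2 := by
        push_cast
        rw [pow_succ]
        rw [← add_div, div_div]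
        rw [div_eq_div_iff (by positivity) (by positivity)]
        ring
      have hstep := gfun_midpoint a V ((m : ℝ≥0) / 2 ^ n) (((m + 1 : ℕ) : ℝ≥0) / 2 ^ n)
      rw [← hmid] at hstep
      have hb1 := ih m hm
      have hb2 := ih (m + 1) hm1
      set x := gfun a V 1
      set y := gfun a V 0
      have hprod : gfun a V (((2 * m + 1 : ℕ) : ℝ≥0) / 2 ^ (n + 1)) ^ 2
          ≤ (x ^ α * y ^ (1 - α)) * (x ^ β * y ^ (1 - β)) :=
        hstep.trans (mul_le_mul' hb1 hb2)
      have hsum_ne : α + β ≠ 0 := by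
        have : (0 : ℝ) < β := by rw [hβ]; positivity
        have : (0 : ℝ) ≤ α := by rw [hα]; positivity
        nlinarith
      have hsum2_ne : (1 - α) + (1 - β) ≠ 0 := by
        have hb : β ≤ 1 := by
          rw [hβ, div_le_one (by positivity)]
          exact_mod_cast hm1
        have ha2 : α < 1 := by
          rw [hα, div_lt_one (by positivity)]
          exact_mod_cast lt_of_lt_of_le (Nat.lt_succ_self m) hm1
        nlinarith
      have hident : (x ^ α * y ^ (1 - α)) * (x ^ β * y ^ (1 - β))
          = (x ^ γ * y ^ (1 - γ)) ^ 2 := by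
        have hx2 : (x ^ γ) ^ (2 : ℕ) = x ^ α * x ^ β := by
          rw [← NNReal.rpow_natCast (x ^ γ) 2, ← NNReal.rpow_mul]
          push_cast
          have h : γ * 2 = α + β := by linarith
          rw [h, NNReal.rpow_add' hsum_ne]
        have hy2 : (y ^ (1 - γ)) ^ (2 : ℕ) = y ^ (1 - α) * y ^ (1 - β) := by
          rw [← NNReal.rpow_natCast (y ^ (1 - γ)) 2, ← NNReal.rpow_mul]
          push_cast
          have h : (1 - γ) * 2 = (1 - α) + (1 - β) := by linarith
          rw [h, NNReal.rpow_add' hsum2_ne]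
        rw [mul_pow, hx2, hy2]
        ring
      rw [hident] at hprod
      exact le_of_pow_le_pow_left₀ two_ne_zero zero_le hprod


-- ‖a^s‖ ≤ ‖a‖^s
lemma myNnrpow_le (a : A) (ha : 0 ≤ a) (s : ℝ≥0) : ‖a ^ s‖₊ ≤ ‖a‖₊ ^ (s : ℝ) := by
  rw [show a ^ s = cfcₙ (NNReal.nnrpow · s) a from rfl]
  refine nnnorm_cfcₙ_nnreal_le fun x hx => ?_
  have h1 : x ≤ ‖a‖₊ := by
    have := apply_le_nnnorm_cfcₙ_nnreal id a hx
    simpa [cfcₙ_id ℝ≥0 a] using this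
  simpa using NNReal.rpow_le_rpow h1 s.2

-- factorization
lemma myFactor (a V : A) {d t : ℝ≥0} (hd : 0 < d) (hdt : d < t) :
    ‖a ^ t * V * a ^ t‖₊ ≤ ‖a ^ (t - d)‖₊ ^ 2 * ‖a ^ d * V * a ^ d‖₊ := by
  have he : 0 < t - d := tsub_pos_of_lt hdt
  have h2 : a ^ t = a ^ d * a ^ (t - d) := by
    rw [← CFC.nnrpow_add hd he, add_tsub_cancel_of_le hdt.le]
  have hcomm : a ^ d * a ^ (t - d) = a ^ (t - d) * a ^ d := by
    rw [← CFC.nnrpow_add hd he, ← CFC.nnrpow_add he hd, add_comm]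
  have hEq : a ^ t * V * a ^ t = a ^ (t - d) * (a ^ d * V * a ^ d) * a ^ (t - d) := by
    rw [h2]
    nth_rewrite 1 [hcomm]
    simp only [mul_assoc]
  rw [hEq]
  calc ‖a ^ (t - d) * (a ^ d * V * a ^ d) * a ^ (t - d)‖₊
      ≤ ‖a ^ (t - d) * (a ^ d * V * a ^ d)‖₊ * ‖a ^ (t - d)‖₊ := nnnorm_mul_le _ _
    _ ≤ ‖a ^ (t - d)‖₊ * ‖a ^ d * V * a ^ d‖₊ * ‖a ^ (t - d)‖₊ :=
        mul_le_mul_left (nnnorm_mul_le _ _) _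
    _ = ‖a ^ (t - d)‖₊ ^ 2 * ‖a ^ d * V * a ^ d‖₊ := by ring

lemma myHeinz [Nontrivial A] (a V : A) (ha : 0 ≤ a) {t : ℝ≥0} (ht0 : 0 < t) (ht : t ≤ 1) :
    ‖a ^ t * V * a ^ t‖₊ ≤ gfun a V 1 ^ (t : ℝ) * ‖V‖₊ ^ ((1 : ℝ) - (t : ℝ)) := by
  rcases eq_or_ne (‖V‖₊) 0 with hV | hV
  · have hV0 : V = 0 := nnnorm_eq_zero.mp hV
    simp only [hV0, mul_zero, zero_mul, nnnorm_zero]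
    exact zero_le
  rcases eq_or_ne (‖a‖₊) 0 with ha0 | ha0
  · have ha0' : a = 0 := nnnorm_eq_zero.mp ha0
    simp only [ha0', CFC.zero_nnrpow, zero_mul, mul_zero, nnnorm_zero]
    exact zero_le
  set g1 := gfun a V 1 with hg1def
  set q : ℕ → ℕ := fun n => ⌊t * 2 ^ n⌋₊ with hq
  set d : ℕ → ℝ≥0 := fun n => (q n : ℝ≥0) / 2 ^ n with hd
  have h2nz : ∀ n : ℕ, ((2 : ℝ≥0) ^ n) ≠ 0 := fun n => by positivity
  have hdt : ∀ n, d n ≤ t := fun n => by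
    rw [hd]
    rw [div_le_iff₀ (by positivity : (0:ℝ≥0) < 2 ^ n)]
    exact Nat.floor_le zero_le
  have hqle : ∀ n, q n ≤ 2 ^ n := fun n => by
    have h1 : t * 2 ^ n ≤ ((2 ^ n : ℕ) : ℝ≥0) := by
      push_cast
      exact mul_le_of_le_one_left zero_le ht
    calc q n ≤ ⌊((2 ^ n : ℕ) : ℝ≥0)⌋₊ := Nat.floor_le_floor h1
      _ = 2 ^ n := Nat.floor_natCast _
  have hdn : ∀ n, ((d n : ℝ≥0) : ℝ) = (q n : ℝ) / 2 ^ n := fun n => by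
    rw [hd]; push_cast; ring
  have hgap : ∀ n, (t : ℝ) - (d n : ℝ) ≤ (1 / 2 : ℝ) ^ n := fun n => by
    have h2pos : (0 : ℝ) < 2 ^ n := by positivity
    have hlt : (t : ℝ) * 2 ^ n < (q n : ℝ) + 1 := by
      have := Nat.lt_floor_add_one (t * (2 : ℝ≥0) ^ n)
      have := (NNReal.coe_lt_coe.mpr this)
      push_cast at this
      convert this using 2 <;> push_cast <;> ring
    have key : (t : ℝ) ≤ ((q n : ℝ) + 1) / 2 ^ n := by
      rw [le_div_iff₀ h2pos]; linarith
    calc (t : ℝ) - (d n : ℝ) ≤ ((q n : ℝ) + 1) / 2 ^ n - (q n : ℝ) / 2 ^ n := by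
          rw [hdn]; linarith
      _ = (1 : ℝ) / 2 ^ n := by ring
      _ = (1 / 2 : ℝ) ^ n := by rw [div_pow, one_pow]
  have hdyadic : ∀ n, gfun a V (d n) ≤ g1 ^ ((d n : ℝ)) * ‖V‖₊ ^ (1 - (d n : ℝ)) := fun n => by
    have := gfun_dyadic a V n (q n) (hqle n)
    rw [gfun_zero] at this
    rw [hd, hdn]
    convert this using 3 <;> rw [hdn n]
  -- the master bound for each n
  have hB : ∀ n, ‖a ^ t * V * a ^ t‖₊ ≤
      ‖a‖₊ ^ (2 * ((t : ℝ) - (d n : ℝ))) * (g1 ^ ((d n : ℝ)) * ‖V‖₊ ^ (1 - (d n : ℝ))) := by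
    intro n
    rcases eq_or_lt_of_le (hdt n) with heq | hlt
    · -- d n = t
      have hh := hdyadic n
      rw [heq, gfun_pos a V ht0] at hh
      rw [heq]
      simp only [sub_self, mul_zero, NNReal.rpow_zero, one_mul]
      exact hh
    · rcases eq_or_lt_of_le (zero_le : 0 ≤ d n) with h0 | h0
      · -- d n = 0 : direct bound
        rw [← h0]
        simp only [NNReal.coe_zero, sub_zero, NNReal.rpow_zero, one_mul, NNReal.rpow_one]
        have hTT : (2 : ℝ) * (t : ℝ) = (t : ℝ) + (t : ℝ) := by ring
        have hTne : (t : ℝ) + (t : ℝ) ≠ 0 := by positivity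
        calc ‖a ^ t * V * a ^ t‖₊ ≤ ‖a ^ t * V‖₊ * ‖a ^ t‖₊ := nnnorm_mul_le _ _
          _ ≤ ‖a ^ t‖₊ * ‖V‖₊ * ‖a ^ t‖₊ := mul_le_mul_left (nnnorm_mul_le _ _) _
          _ ≤ ‖a‖₊ ^ (t : ℝ) * ‖V‖₊ * ‖a‖₊ ^ (t : ℝ) :=
              mul_le_mul' (mul_le_mul' (myNnrpow_le a ha t) le_rfl) (myNnrpow_le a ha t)
          _ = ‖a‖₊ ^ (2 * (t : ℝ)) * ‖V‖₊ := by
              rw [hTT, NNReal.rpow_add' hTne]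
              ring
      · -- 0 < d n < t
        have hfac := myFactor a V h0 hlt
        have hpow := myNnrpow_le a ha (t - d n)
        have hcast : ((t - d n : ℝ≥0) : ℝ) = (t : ℝ) - (d n : ℝ) := by
          rw [NNReal.coe_sub (hlt.le)]
        calc ‖a ^ t * V * a ^ t‖₊ ≤ ‖a ^ (t - d n)‖₊ ^ 2 * ‖a ^ (d n) * V * a ^ (d n)‖₊ := hfac
          _ ≤ (‖a‖₊ ^ ((t - d n : ℝ≥0) : ℝ)) ^ 2 * (g1 ^ ((d n : ℝ)) * ‖V‖₊ ^ (1 - (d n : ℝ))) := by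
              refine mul_le_mul' (pow_le_pow_left' hpow 2) ?_
              have hh := hdyadic n
              rwa [gfun_pos a V h0] at hh
          _ = ‖a‖₊ ^ (2 * ((t : ℝ) - (d n : ℝ))) * (g1 ^ ((d n : ℝ)) * ‖V‖₊ ^ (1 - (d n : ℝ))) := by
              congr 1
              rw [← NNReal.rpow_natCast (‖a‖₊ ^ ((t - d n : ℝ≥0) : ℝ)) 2, ← NNReal.rpow_mul, hcast]
              congr 1
              push_cast
              ring
  -- now the limit
  rcases eq_or_ne g1 0 with hg1 | hg1
  · -- g1 = 0 : pick n with q n ≥ 1 and conclude LHS = 0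
    obtain ⟨n, hn⟩ := pow_unbounded_of_one_lt (t⁻¹ : ℝ≥0) (one_lt_two)
    have hq1 : 1 ≤ q n := by
      have h1 : (1 : ℝ≥0) ≤ t * 2 ^ n := by
        have h2 := mul_le_mul_right hn.le t
        rwa [mul_inv_cancel₀ ht0.ne'] at h2
      exact Nat.le_floor (by exact_mod_cast h1)
    have hd0 : (0 : ℝ≥0) < d n := by
      rw [hd]
      have : (0 : ℝ≥0) < (q n : ℝ≥0) := by exact_mod_cast hq1
      positivity
    have hBn := hB n
    rw [hg1, NNReal.zero_rpow (by exact_mod_cast hd0.ne' : ((d n : ℝ≥0) : ℝ) ≠ 0)] at hBn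
    simp only [zero_mul, mul_zero, le_zero_iff] at hBn
    rw [hBn]
    exact zero_le
  · -- the positive case : pass to the limit in ℝ
    have hx1 : (0 : ℝ) < (g1 : ℝ) := by exact_mod_cast hg1.bot_lt
    have hx0 : (0 : ℝ) < (‖V‖₊ : ℝ) := by exact_mod_cast hV.bot_lt
    have hna : (0 : ℝ) < (‖a‖₊ : ℝ) := by exact_mod_cast ha0.bot_lt
    set na := (‖a‖₊ : ℝ) with hna_def
    set x1 := (g1 : ℝ) with hx1_def
    set x0 := (‖V‖₊ : ℝ) with hx0_def
    set C : ℝ := na ^ 2 * x0 / x1 with hC_def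
    have hC : (0 : ℝ) < C := by positivity
    set K : ℝ := x1 ^ (t : ℝ) * x0 ^ (1 - (t : ℝ)) with hK_def
    have hBR : ∀ n, (‖a ^ t * V * a ^ t‖₊ : ℝ) ≤ K * C ^ ((t : ℝ) - (d n : ℝ)) := by
      intro n
      have hcoe := NNReal.coe_le_coe.mpr (hB n)
      push_cast [NNReal.coe_rpow] at hcoe
      set ε := (t : ℝ) - (d n : ℝ) with hε
      have hε0 : 0 ≤ ε := sub_nonneg.mpr (NNReal.coe_le_coe.mpr (hdt n))
      have hdnε : ((d n : ℝ≥0) : ℝ) = (t : ℝ) - ε := by rw [hε]; ring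
      have hna2 : na ^ (2 * ε) = (na ^ 2) ^ ε := by
        rw [← Real.rpow_natCast na 2, ← Real.rpow_mul hna.le]
        norm_num
      have e1 : C ^ ε = (na ^ 2) ^ ε * x0 ^ ε / x1 ^ ε := by
        rw [hC_def, Real.div_rpow (by positivity) hx1.le,
          Real.mul_rpow (by positivity) hx0.le]
      have hx1ε : (0 : ℝ) < x1 ^ ε := by positivity
      calc (‖a ^ t * V * a ^ t‖₊ : ℝ)
          ≤ na ^ (2 * ε) * (x1 ^ ((d n : ℝ≥0) : ℝ) * x0 ^ (1 - ((d n : ℝ≥0) : ℝ))) := hcoe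
        _ = K * C ^ ε := by
            rw [hdnε, Real.rpow_sub hx1,
              show (1 : ℝ) - ((t : ℝ) - ε) = (1 - (t : ℝ)) + ε by ring,
              Real.rpow_add hx0, hna2, e1, hK_def]
            field_simp
    have hεlim : Filter.Tendsto (fun n => (t : ℝ) - (d n : ℝ)) atTop (nhds 0) := by
      apply squeeze_zero (fun n => sub_nonneg.mpr (NNReal.coe_le_coe.mpr (hdt n))) hgap
      exact tendsto_pow_atTop_nhds_zero_of_lt_one (by norm_num) (by norm_num)
    have hClim : Filter.Tendsto (fun n => C ^ ((t : ℝ) - (d n : ℝ))) atTop (nhds 1) := by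
      have heq : ∀ n, C ^ ((t : ℝ) - (d n : ℝ))
          = Real.exp (Real.log C * ((t : ℝ) - (d n : ℝ))) :=
        fun n => Real.rpow_def_of_pos hC _
      simp only [heq]
      have h2 : Filter.Tendsto (fun n => Real.log C * ((t : ℝ) - (d n : ℝ))) atTop (nhds 0) := by
        simpa using hεlim.const_mul (Real.log C)
      have h3 := (Real.continuous_exp.tendsto 0).comp h2
      simpa [Function.comp_def, Real.exp_zero] using h3
    have hKlim : Filter.Tendsto (fun n => K * C ^ ((t : ℝ) - (d n : ℝ))) atTop (nhds K) := by
      have := hClim.const_mul K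
      simpa using this
    have hfin : (‖a ^ t * V * a ^ t‖₊ : ℝ) ≤ K := ge_of_tendsto hKlim (Filter.Eventually.of_forall hBR)
    rw [← NNReal.coe_le_coe]
    push_cast [NNReal.coe_rpow]
    exact hfin


lemma myHeinzFinal [Nontrivial A] (a V : A) (ha : 0 ≤ a) {t : ℝ≥0} (ht0 : 0 < t) (ht : t ≤ 1) :
    ‖a ^ t * V * a ^ t‖₊ ≤ ‖a * V * a‖₊ ^ (t : ℝ) * ‖V‖₊ ^ ((1 : ℝ) - (t : ℝ)) := by
  have h := myHeinz a V ha ht0 ht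
  rwa [gfun_pos a V one_pos, CFC.nnrpow_one a ha] at h

end Abstract

section Hilbert

local notation "⟪" x ", " y "⟫" => @inner ℂ _ _ x y

lemma opAbs_nonneg (T : H →L[ℂ] H) : (0 : H →L[ℂ] H) ≤ opAbs T := CFC.sqrt_nonneg _

lemma adjoint_mul_self_nonneg (T : H →L[ℂ] H) : (0 : H →L[ℂ] H) ≤ adjoint T * T := by
  rw [← star_eq_adjoint]
  exact star_mul_self_nonneg T

lemma opAbs_mul_self (T : H →L[ℂ] H) : opAbs T * opAbs T = adjoint T * T :=
  CFC.sqrt_mul_sqrt_self _ (adjoint_mul_self_nonneg T)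

lemma opAbs_adjoint (T : H →L[ℂ] H) : adjoint (opAbs T) = opAbs T := by
  rw [← star_eq_adjoint]
  exact (IsSelfAdjoint.of_nonneg (opAbs_nonneg T)).star_eq

lemma opAbs_move (T : H →L[ℂ] H) (u v : H) : ⟪opAbs T u, v⟫ = ⟪u, opAbs T v⟫ := by
  conv_lhs => rw [← opAbs_adjoint T]
  exact adjoint_inner_left (opAbs T) v u

lemma opAbs_apply_norm (T : H →L[ℂ] H) (x : H) : ‖opAbs T x‖ = ‖T x‖ := by
  have key : ⟪opAbs T x, opAbs T x⟫ = ⟪T x, T x⟫ := by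
    calc ⟪opAbs T x, opAbs T x⟫ = ⟪x, opAbs T (opAbs T x)⟫ := opAbs_move T x (opAbs T x)
      _ = ⟪x, (opAbs T * opAbs T) x⟫ := rfl
      _ = ⟪x, (adjoint T * T) x⟫ := by rw [opAbs_mul_self]
      _ = ⟪x, adjoint T (T x)⟫ := rfl
      _ = ⟪T x, T x⟫ := adjoint_inner_right T x (T x)
  rw [@norm_eq_sqrt_re_inner ℂ, @norm_eq_sqrt_re_inner ℂ H _ _ _ (T x), key]

lemma norm_eq_of_pointwise (S R : H →L[ℂ] H) (h : ∀ x, ‖S x‖ = ‖R x‖) : ‖S‖ = ‖R‖ :=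
  le_antisymm
    (opNorm_le_bound _ (norm_nonneg R) fun x => (h x).le.trans (R.le_opNorm x))
    (opNorm_le_bound _ (norm_nonneg S) fun x => (h x).ge.trans (S.le_opNorm x))

lemma opAbs_norm (T : H →L[ℂ] H) : ‖opAbs T‖ = ‖T‖ :=
  norm_eq_of_pointwise _ _ (opAbs_apply_norm T)

lemma opAbs_mid_norm (T U : H →L[ℂ] H) (hU : T = U * opAbs T) :
    ‖opAbs T * U * opAbs T‖ = ‖T ^ 2‖ := by
  refine norm_eq_of_pointwise _ _ fun x => ?_
  have h1 : (opAbs T * U * opAbs T) x = opAbs T (U (opAbs T x)) := rfl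
  have h2 : (T ^ 2) x = T (T x) := by rw [pow_two]; rfl
  have happ : ∀ y, T y = U (opAbs T y) := fun y => by
    conv_lhs => rw [hU]
    rfl
  rw [h1, h2, opAbs_apply_norm T, ← happ x]

lemma norm_U_le_one (T U : H →L[ℂ] H) (hU : T = U * opAbs T)
    (hker : LinearMap.ker (U : H →ₗ[ℂ] H) = LinearMap.ker (T : H →ₗ[ℂ] H)) : ‖U‖ ≤ 1 := by
  refine opNorm_le_bound U zero_le_one fun x => ?_
  rw [one_mul]
  set K : Submodule ℂ H := LinearMap.ker (U : H →ₗ[ℂ] H) with hK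
  have hKclosed : IsClosed (K : Set H) := isClosed_ker U
  haveI : CompleteSpace K := hKclosed.completeSpace_coe
  set z := (K.orthogonalProjectionOnto x : H) with hz_def
  have hz : z ∈ K := (K.orthogonalProjectionOnto x).2
  have hy : x - z ∈ Kᗮ := Submodule.sub_starProjection_mem_orthogonal (K := K) x
  have hker_a : K = LinearMap.ker (opAbs T : H →ₗ[ℂ] H) := by
    rw [hker]
    ext w
    simp only [LinearMap.mem_ker, ContinuousLinearMap.coe_coe]
    rw [← norm_eq_zero, ← norm_eq_zero (a := opAbs T w), ← opAbs_apply_norm T w]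
  have horth : K = (LinearMap.range (opAbs T : H →ₗ[ℂ] H))ᗮ := by
    rw [hker_a]
    ext w
    constructor
    · intro hw
      rw [Submodule.mem_orthogonal]
      rintro u ⟨v, rfl⟩
      show ⟪opAbs T v, w⟫ = 0
      rw [opAbs_move T v w, (show opAbs T w = 0 from LinearMap.mem_ker.mp hw), inner_zero_right]
    · intro hw
      rw [LinearMap.mem_ker]
      have h1 : ⟪opAbs T (opAbs T w), w⟫ = 0 := by
        rw [Submodule.mem_orthogonal] at hw
        exact hw _ ⟨opAbs T w, rfl⟩
      rw [opAbs_move T (opAbs T w) w] at h1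
      exact inner_self_eq_zero.mp h1
  have hyiso : ‖U (x - z)‖ = ‖x - z‖ := by
    have hsub : (Kᗮ : Set H) ⊆ closure ((LinearMap.range (opAbs T : H →ₗ[ℂ] H) : Submodule ℂ H) : Set H) := by
      rw [horth]
      intro w hw
      have h2 := Submodule.orthogonal_orthogonal_eq_closure
        (K := (LinearMap.range (opAbs T : H →ₗ[ℂ] H) : Submodule ℂ H))
      rw [h2] at hw
      rw [← Submodule.topologicalClosure_coe]
      exact hw
    have hsetcl : IsClosed {w : H | ‖U w‖ = ‖w‖} :=
      isClosed_eq (continuous_norm.comp U.continuous) continuous_norm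
    have hsub2 : ((LinearMap.range (opAbs T : H →ₗ[ℂ] H) : Submodule ℂ H) : Set H) ⊆ {w | ‖U w‖ = ‖w‖} := by
      rintro _ ⟨v, rfl⟩
      have happ : T v = U (opAbs T v) := by
        conv_lhs => rw [hU]
        rfl
      show ‖U (opAbs T v)‖ = ‖opAbs T v‖
      rw [← happ, ← opAbs_apply_norm T v]
    exact closure_minimal hsub2 hsetcl (hsub hy)
  have hUz : U z = 0 := LinearMap.mem_ker.mp hz
  have hUx : U x = U (x - z) := by rw [map_sub, hUz, sub_zero]
  rw [hUx, hyiso]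
  have hinner : ⟪z, x - z⟫ = 0 := Submodule.inner_right_of_mem_orthogonal hz hy
  have hpyth : ‖x‖ ^ 2 = ‖z‖ ^ 2 + ‖x - z‖ ^ 2 := by
    have h4 := @norm_add_sq ℂ H _ _ _ z (x - z)
    rw [hinner] at h4
    simp only [map_zero, mul_zero, add_zero] at h4
    calc ‖x‖ ^ 2 = ‖z + (x - z)‖ ^ 2 := by rw [add_sub_cancel]
      _ = ‖z‖ ^ 2 + ‖x - z‖ ^ 2 := by rw [h4]
  nlinarith [norm_nonneg (x - z), norm_nonneg x, norm_nonneg z]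


end Hilbert

/-- For t ∈ [0, 1/2], ‖T̃_t‖ ≤ ‖T²‖^t ‖T‖^{1-2t}. -/
theorem norm_aluthge_le_of_le_half (T U : H →L[ℂ] H)
    (hU : T = U * opAbs T) (hker : LinearMap.ker (U : H →ₗ[ℂ] H) = LinearMap.ker (T : H →ₗ[ℂ] H))
    (t : ℝ≥0) (ht : t ≤ 1 / 2) :
    ‖aluthge T U t‖ ≤ ‖T ^ 2‖ ^ (t : ℝ) * ‖T‖ ^ (1 - 2 * (t : ℝ)) := by
  rcases subsingleton_or_nontrivial H with hH | hH
  · have h0 : aluthge T U t = 0 := Subsingleton.elim _ _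
    rw [h0, norm_zero]
    positivity
  haveI : Nontrivial (H →L[ℂ] H) := by
    obtain ⟨x, hx⟩ := exists_ne (0 : H)
    exact ⟨1, 0, fun h => hx (by simpa using DFunLike.congr_fun h x)⟩
  rcases eq_or_lt_of_le (zero_le : 0 ≤ t) with ht0 | ht0
  · have h0 : aluthge T U t = 0 := by
      rw [aluthge, ← ht0, show CFC.nnrpow (opAbs T) 0 = 0 from CFC.nnrpow_zero]
      simp
    rw [h0, norm_zero]
    positivity
  set a := opAbs T with ha_def
  have ha : (0 : H →L[ℂ] H) ≤ a := opAbs_nonneg T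
  have ht1 : t ≤ 1 := ht.trans (by norm_num)
  have hTT : ‖a * U * a‖₊ = ‖T ^ 2‖₊ :=
    NNReal.coe_injective (by simpa using opAbs_mid_norm T U hU)
  have hanorm : ‖a‖₊ = ‖T‖₊ := NNReal.coe_injective (by simpa using opAbs_norm T)
  have hU1 : ‖U‖₊ ≤ 1 := by
    rw [← NNReal.coe_le_coe]
    simpa using norm_U_le_one T U hU hker
  suffices hkey : ‖aluthge T U t‖₊ ≤ ‖T ^ 2‖₊ ^ (t : ℝ) * ‖T‖₊ ^ (1 - 2 * (t : ℝ)) by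
    have h := NNReal.coe_le_coe.mpr hkey
    push_cast at h
    exact h
  have halu : aluthge T U t = a ^ t * U * a ^ (1 - t) := rfl
  rcases eq_or_lt_of_le ht with heq | hlt
  · -- t = 1/2
    have h1t : (1 : ℝ≥0) - t = t := by
      apply NNReal.coe_injective
      rw [NNReal.coe_sub ht1]
      rw [heq]
      norm_num
    have hexp : (1 : ℝ) - 2 * ((t : ℝ≥0) : ℝ) = 0 := by
      rw [heq]
      norm_num
    calc ‖aluthge T U t‖₊ = ‖a ^ t * U * a ^ t‖₊ := by rw [halu, h1t]
      _ ≤ ‖a * U * a‖₊ ^ (t : ℝ) * ‖U‖₊ ^ ((1 : ℝ) - (t : ℝ)) := myHeinzFinal a U ha ht0 ht1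
      _ ≤ ‖T ^ 2‖₊ ^ (t : ℝ) * 1 := by
          rw [hTT]
          exact mul_le_mul' le_rfl
            (NNReal.rpow_le_one hU1 (by
              have : ((t : ℝ≥0) : ℝ) ≤ 1 := by exact_mod_cast ht1
              linarith))
      _ = ‖T ^ 2‖₊ ^ (t : ℝ) * ‖T‖₊ ^ (1 - 2 * (t : ℝ)) := by
          rw [hexp, NNReal.rpow_zero, mul_one]
  · -- t < 1/2
    have h2t : 2 * t < 1 := by
      rw [← NNReal.coe_lt_coe]
      push_cast
      have : ((t : ℝ≥0) : ℝ) < 1 / 2 := by exact_mod_cast hlt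
      linarith
    have h2t' : 2 * t ≤ 1 := h2t.le
    have hpos2 : (0 : ℝ≥0) < 1 - 2 * t := tsub_pos_of_lt h2t
    have hsplit : (1 : ℝ≥0) - t = t + ((1 : ℝ≥0) - 2 * t) := by
      apply NNReal.coe_injective
      push_cast [NNReal.coe_sub ht1, NNReal.coe_sub h2t']
      ring
    have hexp2 : (((1 : ℝ≥0) - 2 * t : ℝ≥0) : ℝ) = 1 - 2 * ((t : ℝ≥0) : ℝ) := by
      rw [NNReal.coe_sub h2t']
      push_cast
      ring
    rw [halu, hsplit, CFC.nnrpow_add ht0 hpos2]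
    calc ‖a ^ t * U * (a ^ t * a ^ ((1 : ℝ≥0) - 2 * t))‖₊
        = ‖a ^ t * U * a ^ t * a ^ ((1 : ℝ≥0) - 2 * t)‖₊ := by rw [← mul_assoc]
      _ ≤ ‖a ^ t * U * a ^ t‖₊ * ‖a ^ ((1 : ℝ≥0) - 2 * t)‖₊ := nnnorm_mul_le _ _
      _ ≤ (‖a * U * a‖₊ ^ (t : ℝ) * ‖U‖₊ ^ ((1 : ℝ) - (t : ℝ)))
            * ‖a‖₊ ^ ((((1 : ℝ≥0) - 2 * t : ℝ≥0)) : ℝ) :=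
          mul_le_mul' (myHeinzFinal a U ha ht0 ht1) (myNnrpow_le a ha _)
      _ ≤ (‖T ^ 2‖₊ ^ (t : ℝ) * 1) * ‖T‖₊ ^ ((((1 : ℝ≥0) - 2 * t : ℝ≥0)) : ℝ) := by
          rw [hTT, hanorm]
          refine mul_le_mul' (mul_le_mul' le_rfl (NNReal.rpow_le_one hU1 ?_)) le_rfl
          have : ((t : ℝ≥0) : ℝ) ≤ 1 := by exact_mod_cast ht1
          linarith
      _ = ‖T ^ 2‖₊ ^ (t : ℝ) * ‖T‖₊ ^ (1 - 2 * (t : ℝ)) := by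
          rw [mul_one, hexp2]
end

section
/- For a bounded linear operator T on a complex Hilbert space, if T² = 0 then the t-Aluthge transform T̃_t = 0 for every t ∈ [0,1]. -/
open scoped NNReal ENNReal
open ContinuousLinearMap

set_option synthInstance.maxHeartbeats 1000000
set_option maxHeartbeats 1000000


variable {H : Type*} [NormedAddCommGroup H] [InnerProductSpace ℂ H] [CompleteSpace H]

local notation "⟪" x ", " y "⟫" => @inner ℂ H _ x y

private lemma sa_adjoint_eq {B : H →L[ℂ] H} (hB : IsSelfAdjoint B) :
    ContinuousLinearMap.adjoint B = B := by
  rw [← ContinuousLinearMap.star_eq_adjoint]; exact hB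

private lemma sa_apply_eq_zero_of_sq {B : H →L[ℂ] H} (hB : IsSelfAdjoint B)
    {x : H} (hx : B (B x) = 0) : B x = 0 := by
  have h1 : ⟪(ContinuousLinearMap.adjoint B) x, B x⟫ = ⟪x, B (B x)⟫ :=
    ContinuousLinearMap.adjoint_inner_left B (B x) x
  rw [sa_adjoint_eq hB, hx, inner_zero_right] at h1
  exact inner_self_eq_zero.mp h1

/-- If `A x = 0` then `A ^ s x = 0` for positive `A` and `s > 0`. -/
private lemma nnrpow_apply_eq_zero {A : H →L[ℂ] H} (hA : 0 ≤ A) {x : H}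
    (hx : A x = 0) {s : ℝ≥0} (hs : 0 < s) : CFC.nnrpow A s x = 0 := by
  obtain ⟨n, hn⟩ : ∃ n : ℕ, 1 ≤ 2 ^ n * s := by
    obtain ⟨n, hn⟩ := pow_unbounded_of_one_lt (s⁻¹) (one_lt_two (α := ℝ≥0))
    exact ⟨n, by rw [← div_le_iff₀ hs, div_eq_mul_inv, one_mul] at *; exact hn.le⟩
  induction n generalizing s with
  | zero =>
    simp only [pow_zero, one_mul] at hn
    rcases eq_or_lt_of_le hn with heq | hlt
    · rw [← heq]
      show (A ^ (1 : ℝ≥0)) x = 0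
      rw [CFC.nnrpow_one A hA, hx]
    · have hdecomp : s = (s - 1) + 1 := (tsub_add_cancel_of_le hn).symm
      rw [hdecomp]
      show (A ^ (s - 1 + 1)) x = 0
      rw [CFC.nnrpow_add (tsub_pos_of_lt hlt) one_pos,
        ContinuousLinearMap.mul_apply, CFC.nnrpow_one A hA, hx, map_zero]
  | succ n ih =>
    have h2 : CFC.nnrpow A (s + s) x = 0 := by
      apply ih (by positivity)
      calc (1 : ℝ≥0) ≤ 2 ^ (n + 1) * s := hn
        _ = 2 ^ n * (s + s) := by ring
    have hsa : IsSelfAdjoint (CFC.nnrpow A s) :=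
      IsSelfAdjoint.of_nonneg CFC.nnrpow_nonneg
    apply sa_apply_eq_zero_of_sq hsa
    show (A ^ s) ((A ^ s) x) = 0
    have e2 : (A ^ s) ((A ^ s) x) = (A ^ s * A ^ s) x := rfl
    rw [e2, ← CFC.nnrpow_add hs hs]
    exact h2

/-- If T² = 0 then every t-Aluthge transform vanishes. -/
theorem aluthge_eq_zero_of_sq_eq_zero (T U : H →L[ℂ] H)
    (hU : T = U * opAbs T) (hker : LinearMap.ker (U : H →ₗ[ℂ] H) = LinearMap.ker (T : H →ₗ[ℂ] H))
    (h : T ^ 2 = 0) :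
    ∀ t : ℝ≥0, t ≤ 1 → aluthge T U t = 0 := by
  intro t ht
  set A := opAbs T with hAdef
  have hA : 0 ≤ A := CFC.sqrt_nonneg _
  have hAsa : IsSelfAdjoint A := IsSelfAdjoint.of_nonneg hA
  have h0 : (0 : H →L[ℂ] H) ≤ adjoint T * T := by
    rw [← ContinuousLinearMap.star_eq_adjoint]; exact star_mul_self_nonneg T
  have hAsq : A * A = adjoint T * T := by
    have := CFC.sq_sqrt (adjoint T * T) h0
    rw [pow_two] at this
    simpa [hAdef, opAbs] using this
  -- kernels of T and A coincide, pointwise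
  have hker_iff : ∀ y, T y = 0 ↔ A y = 0 := by
    intro y
    have e : ⟪T y, T y⟫ = ⟪A y, A y⟫ := by
      calc ⟪T y, T y⟫ = ⟪y, (adjoint T) (T y)⟫ :=
            (ContinuousLinearMap.adjoint_inner_right T y (T y)).symm
        _ = ⟪y, (adjoint T * T) y⟫ := rfl
        _ = ⟪y, (A * A) y⟫ := by rw [hAsq]
        _ = ⟪y, (adjoint A) (A y)⟫ := by rw [sa_adjoint_eq hAsa]; rfl
        _ = ⟪A y, A y⟫ := ContinuousLinearMap.adjoint_inner_right A y (A y)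
    constructor
    · intro hy
      have h5 : ⟪A y, A y⟫ = 0 := by rw [← e, hy, inner_zero_right]
      exact inner_self_eq_zero.mp h5
    · intro hy
      have h5 : ⟪T y, T y⟫ = 0 := by rw [e, hy, inner_zero_right]
      exact inner_self_eq_zero.mp h5
  -- T ∘ U kills the range of A
  have hTUA : ∀ y, T (U (A y)) = 0 := by
    intro y
    have e : T (U (A y)) = (T * (U * A)) y := rfl
    rw [e, ← hU, ← pow_two, h, ContinuousLinearMap.zero_apply]
  -- dispose of the endpoint cases
  rcases eq_or_lt_of_le ht with ht1 | ht1
  · simp [aluthge, CFC.nnrpow_eq_pow, ht1, CFC.nnrpow_zero]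
  rcases eq_or_lt_of_le (zero_le : 0 ≤ t) with ht0 | ht0
  · simp [aluthge, CFC.nnrpow_eq_pow, ← ht0, CFC.nnrpow_zero]
  have hs : 0 < 1 - t := tsub_pos_of_lt ht1
  -- main case
  ext x
  have goal_eq : aluthge T U t x
      = CFC.nnrpow A t (U (CFC.nnrpow A (1 - t) x)) := rfl
  rw [goal_eq, ContinuousLinearMap.zero_apply]
  -- the vector A^{1-t} x lies in (ker A)ᗮ
  have hmem : CFC.nnrpow A (1 - t) x ∈ (LinearMap.ker (A : H →ₗ[ℂ] H))ᗮ := by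
    rw [Submodule.mem_orthogonal]
    intro u hu
    have hu' : A u = 0 := hu
    have h1 : CFC.nnrpow A (1 - t) u = 0 := nnrpow_apply_eq_zero hA hu' hs
    have hBsa : IsSelfAdjoint (CFC.nnrpow A (1 - t)) :=
      IsSelfAdjoint.of_nonneg CFC.nnrpow_nonneg
    calc ⟪u, CFC.nnrpow A (1 - t) x⟫
        = ⟪u, (adjoint (CFC.nnrpow A (1 - t))) x⟫ := by rw [sa_adjoint_eq hBsa]
      _ = ⟪CFC.nnrpow A (1 - t) u, x⟫ :=
          ContinuousLinearMap.adjoint_inner_right _ u x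
      _ = 0 := by rw [h1, inner_zero_left]
  -- (ker A)ᗮ is contained in ker (T ∘ U)
  have hkerA : LinearMap.ker (A : H →ₗ[ℂ] H) = (LinearMap.range (A : H →ₗ[ℂ] H))ᗮ := by
    ext y
    simp only [LinearMap.mem_ker, Submodule.mem_orthogonal]
    constructor
    · rintro hy u ⟨w, rfl⟩
      calc ⟪A w, y⟫ = ⟪w, (adjoint A) y⟫ :=
            (ContinuousLinearMap.adjoint_inner_right A w y).symm
        _ = ⟪w, A y⟫ := by rw [sa_adjoint_eq hAsa]
        _ = 0 := by rw [show A y = 0 from hy, inner_zero_right]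
    · intro hy
      have h6 : ⟪A y, A y⟫ = 0 := by
        have h5 := hy (A (A y)) ⟨A y, rfl⟩
        calc ⟪A y, A y⟫ = ⟪(adjoint A) (A y), y⟫ :=
              (ContinuousLinearMap.adjoint_inner_left A y (A y)).symm
          _ = ⟪A (A y), y⟫ := by rw [sa_adjoint_eq hAsa]
          _ = 0 := h5
      exact inner_self_eq_zero.mp h6
  have hclos : (LinearMap.ker (A : H →ₗ[ℂ] H))ᗮ ≤ LinearMap.ker ((T * U : H →L[ℂ] H) : H →ₗ[ℂ] H) := by
    rw [hkerA, Submodule.orthogonal_orthogonal_eq_closure]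
    apply Submodule.topologicalClosure_minimal
    · rintro z ⟨y, rfl⟩
      exact hTUA y
    · exact ContinuousLinearMap.isClosed_ker _
  have h3 : T (U (CFC.nnrpow A (1 - t) x)) = 0 := hclos hmem
  have h4 : A (U (CFC.nnrpow A (1 - t) x)) = 0 := (hker_iff _).mp h3
  exact nnrpow_apply_eq_zero hA h4 ht0
end

section
/- For a bounded linear operator T on a complex Hilbert space, w(T)² ≤ (1/2)·[ ‖T²‖^{1/2}·((1/2)‖T‖ + (1/2)‖T²‖^{1/2}) + (1/2)‖T*T + TT*‖ ]. -/
open scoped NNReal ENNReal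
open ContinuousLinearMap

set_option synthInstance.maxHeartbeats 1000000
set_option maxHeartbeats 1000000


variable {H : Type*} [NormedAddCommGroup H] [InnerProductSpace ℂ H] [CompleteSpace H]

/-- Pointwise Kittaneh-type bound: for a unit vector `x`,
`|⟨Tx, x⟩|² ≤ (1/2)‖T²‖ + (1/4)‖T*T + TT*‖`. -/
lemma pointwise_numRadius_bound (T : H →L[ℂ] H) (x : H) (hx : ‖x‖ = 1) :
    ‖(inner ℂ (T x) x : ℂ)‖ ^ 2
      ≤ (1/2) * ‖T ^ 2‖ + (1/4) * ‖adjoint T * T + T * adjoint T‖ := by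
  set c : ℂ := inner ℂ (T x) x with hc
  have hA : (0:ℝ) ≤ ‖adjoint T * T + T * adjoint T‖ := norm_nonneg _
  have hT2 : (0:ℝ) ≤ ‖T ^ 2‖ := norm_nonneg _
  by_cases h0 : c = 0
  · rw [h0]; simpa using by positivity
  · set u : ℂ := star c / (‖c‖ : ℂ) with hu
    have hcn : (‖c‖ : ℝ) ≠ 0 := norm_ne_zero_iff.mpr h0
    have hcn' : ((‖c‖ : ℝ) : ℂ) ≠ 0 := by exact_mod_cast hcn
    have hunorm : ‖u‖ = 1 := by
      rw [hu, norm_div, norm_star, Complex.norm_real, Real.norm_eq_abs,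
        abs_of_nonneg (norm_nonneg c), div_self hcn]
    have huc : u * c = (‖c‖ : ℂ) := by
      have hcc : c * star c = ((‖c‖:ℂ))^2 := RCLike.mul_conj c
      rw [hu, div_mul_eq_mul_div, mul_comm, hcc, sq, mul_div_assoc,
        div_self hcn', mul_one]
    -- the vector y
    set y : H := (star u) • T x + u • (adjoint T x) with hy
    have hyx : (inner ℂ y x : ℂ) = 2 * ‖c‖ := by
      rw [hy, inner_add_left, inner_smul_left, inner_smul_left]
      have h1 : (inner ℂ ((adjoint T) x) x : ℂ) = star c := by
        rw [adjoint_inner_left, hc, ← inner_conj_symm]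
        rfl
      rw [h1, starRingEnd_apply, starRingEnd_apply, star_star, ← hc, ← star_mul',
        huc]
      simp [two_mul]
    -- Cauchy-Schwarz
    have hCS : 2 * ‖c‖ ≤ ‖y‖ := by
      have := norm_inner_le_norm (𝕜 := ℂ) y x
      rw [hyx, hx, mul_one] at this
      calc 2 * ‖c‖ = ‖(2 * (‖c‖:ℂ) : ℂ)‖ := by
            rw [norm_mul]; simp
        _ ≤ ‖y‖ := this
    -- expand ‖y‖²
    have hT2x : T (T x) = (T ^ 2) x := by
      rw [pow_two, ContinuousLinearMap.mul_apply]
    have hcross : 2 * RCLike.re (inner ℂ ((star u) • T x) (u • (adjoint T x)) : ℂ)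
        ≤ 2 * ‖T ^ 2‖ := by
      have h2 : (inner ℂ ((star u) • T x) (u • (adjoint T x)) : ℂ)
          = u * u * inner ℂ ((T ^ 2) x) x := by
        rw [inner_smul_left, inner_smul_right, adjoint_inner_right, hT2x,
          starRingEnd_apply, star_star]
        ring
      have h3 : RCLike.re (inner ℂ ((star u) • T x) (u • (adjoint T x)) : ℂ)
          ≤ ‖T ^ 2‖ := by
        calc RCLike.re (inner ℂ ((star u) • T x) (u • (adjoint T x)) : ℂ)
            ≤ ‖(inner ℂ ((star u) • T x) (u • (adjoint T x)) : ℂ)‖ :=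
              RCLike.re_le_norm _
          _ = ‖(inner ℂ ((T ^ 2) x) x : ℂ)‖ := by
              rw [h2, norm_mul, norm_mul, hunorm]; ring
          _ ≤ ‖(T ^ 2) x‖ * ‖x‖ := norm_inner_le_norm _ _
          _ ≤ ‖T ^ 2‖ * ‖x‖ * ‖x‖ := by
              have := le_opNorm (T ^ 2) x
              nlinarith [norm_nonneg x]
          _ = ‖T ^ 2‖ := by rw [hx]; ring
      linarith
    have hnorms : ‖T x‖ ^ 2 + ‖(adjoint T) x‖ ^ 2
        ≤ ‖adjoint T * T + T * adjoint T‖ := by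
      have e1 : (inner ℂ (((adjoint T * T + T * adjoint T)) x) x : ℂ)
          = inner ℂ (T x) (T x) + inner ℂ ((adjoint T) x) ((adjoint T) x) := by
        rw [ContinuousLinearMap.add_apply, inner_add_left, ContinuousLinearMap.mul_apply, ContinuousLinearMap.mul_apply,
          adjoint_inner_left]
        congr 1
        exact (adjoint_inner_right T _ _).symm
      have e2 : RCLike.re (inner ℂ (((adjoint T * T + T * adjoint T)) x) x : ℂ)
          = ‖T x‖ ^ 2 + ‖(adjoint T) x‖ ^ 2 := by
        rw [e1, map_add, inner_self_eq_norm_sq, inner_self_eq_norm_sq]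
      calc ‖T x‖ ^ 2 + ‖(adjoint T) x‖ ^ 2
          = RCLike.re (inner ℂ (((adjoint T * T + T * adjoint T)) x) x : ℂ) := e2.symm
        _ ≤ ‖(inner ℂ (((adjoint T * T + T * adjoint T)) x) x : ℂ)‖ := RCLike.re_le_norm _
        _ ≤ ‖((adjoint T * T + T * adjoint T)) x‖ * ‖x‖ := norm_inner_le_norm _ _
        _ ≤ ‖adjoint T * T + T * adjoint T‖ * ‖x‖ * ‖x‖ := by
            have := le_opNorm (adjoint T * T + T * adjoint T) x
            nlinarith [norm_nonneg x]
        _ = ‖adjoint T * T + T * adjoint T‖ := by rw [hx]; ring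
    have hysq : ‖y‖ ^ 2 ≤ ‖adjoint T * T + T * adjoint T‖ + 2 * ‖T ^ 2‖ := by
      have := norm_add_sq (𝕜 := ℂ) ((star u) • T x) (u • (adjoint T x))
      rw [← hy] at this
      have hn1 : ‖(star u) • T x‖ = ‖T x‖ := by
        rw [norm_smul, norm_star, hunorm, one_mul]
      have hn2 : ‖u • (adjoint T x)‖ = ‖(adjoint T) x‖ := by
        rw [norm_smul, hunorm, one_mul]
      rw [hn1, hn2] at this
      rw [this]
      linarith
    nlinarith [norm_nonneg c, norm_nonneg y]

/-- w(T)² ≤ (1/2)[‖T²‖^{1/2}((1/2)‖T‖ + (1/2)‖T²‖^{1/2}) + (1/2)‖T*T+TT*‖]. -/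
theorem numRadius_sq_le_corollary_bound (T : H →L[ℂ] H) :
    numRadius T ^ 2 ≤ (1 / 2) * (‖T ^ 2‖ ^ ((1 : ℝ) / 2)
        * ((1 / 2) * ‖T‖ + (1 / 2) * ‖T ^ 2‖ ^ ((1 : ℝ) / 2))
      + (1 / 2) * ‖adjoint T * T + T * adjoint T‖) := by
  set a : ℝ := ‖T ^ 2‖ ^ ((1 : ℝ) / 2) with haDef
  set b : ℝ := ‖adjoint T * T + T * adjoint T‖ with hbDef
  have hx2 : (0:ℝ) ≤ ‖T ^ 2‖ := norm_nonneg _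
  have hb : (0:ℝ) ≤ b := norm_nonneg _
  have ha0 : 0 ≤ a := Real.rpow_nonneg hx2 _
  have haa : a * a = ‖T ^ 2‖ := by
    rw [haDef, ← Real.rpow_add' hx2 (by norm_num : (1:ℝ)/2 + 1/2 ≠ 0)]
    norm_num
  have haT : a ≤ ‖T‖ := by
    have h1 : ‖T ^ 2‖ ≤ ‖T‖ ^ 2 := by
      calc ‖T ^ 2‖ = ‖T * T‖ := by rw [pow_two]
        _ ≤ ‖T‖ * ‖T‖ := norm_mul_le T T
        _ = ‖T‖ ^ 2 := (sq ‖T‖).symm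
    calc a ≤ (‖T‖ ^ 2) ^ ((1:ℝ)/2) := Real.rpow_le_rpow hx2 h1 (by norm_num)
      _ = ‖T‖ := by
          rw [← Real.rpow_natCast ‖T‖ 2, ← Real.rpow_mul (norm_nonneg T)]
          norm_num
  set M : ℝ := (1/2) * ‖T ^ 2‖ + (1/4) * b with hM
  have hM0 : 0 ≤ M := by positivity
  have hw : numRadius T ≤ Real.sqrt M := by
    apply Real.iSup_le _ (Real.sqrt_nonneg _)
    intro z
    have := pointwise_numRadius_bound T z.1 z.2
    rw [Real.le_sqrt (norm_nonneg _)]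
    · exact this
    · exact hM0
  have hw0 : 0 ≤ numRadius T := Real.iSup_nonneg fun z => norm_nonneg _
  have hwsq : numRadius T ^ 2 ≤ M := by
    nlinarith [Real.sq_sqrt hM0]
  have : M ≤ (1 / 2) * (a * ((1 / 2) * ‖T‖ + (1 / 2) * a) + (1 / 2) * b) := by
    nlinarith [mul_le_mul_of_nonneg_left haT ha0]
  exact hwsq.trans this
end

section
/- For a bounded linear operator T on a complex Hilbert space, (1/4)‖T*T + TT*‖ ≤ w(T)² ≤ (1/2)‖T*T + TT*‖. -/
open scoped NNReal ENNReal
open ContinuousLinearMap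

set_option synthInstance.maxHeartbeats 1000000
set_option maxHeartbeats 1000000


variable {H : Type*} [NormedAddCommGroup H] [InnerProductSpace ℂ H] [CompleteSpace H]

local notation "⟪" x ", " y "⟫" => @inner ℂ _ _ x y

lemma aux_re_le_norm (z : ℂ) : |z.re| ≤ ‖z‖ := by
  exact Complex.abs_re_le_norm z

/-- Scaling of a numerical-range bound from unit vectors to all vectors. -/
lemma aux_inner_scale (A : H →L[ℂ] H) (M : ℝ)
    (h : ∀ x : H, ‖x‖ = 1 → ‖⟪A x, x⟫‖ ≤ M) (x : H) :
    ‖⟪A x, x⟫‖ ≤ M * ‖x‖ ^ 2 := by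
  rcases eq_or_ne x 0 with rfl | hx
  · simp
  · have hn : ‖x‖ ≠ 0 := norm_ne_zero_iff.mpr hx
    have hnc : ((‖x‖ : ℝ) : ℂ) ≠ 0 := by exact_mod_cast hn
    set u : H := (((‖x‖ : ℝ) : ℂ))⁻¹ • x with hu
    have hu1 : ‖u‖ = 1 := by
      rw [hu, norm_smul, norm_inv, Complex.norm_real, norm_norm, inv_mul_cancel₀ hn]
    have hxu : x = ((‖x‖ : ℝ) : ℂ) • u := by
      rw [hu, smul_smul, mul_inv_cancel₀ hnc, one_smul]
    have key : ⟪A x, x⟫ = (starRingEnd ℂ ((‖x‖ : ℝ) : ℂ)) * (((‖x‖ : ℝ) : ℂ) * ⟪A u, u⟫) := by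
      conv_lhs => rw [hxu]
      rw [map_smul, inner_smul_left, inner_smul_right]
    rw [key, norm_mul, norm_mul, RCLike.norm_conj]
    have hc : ‖((‖x‖ : ℝ) : ℂ)‖ = ‖x‖ := by
      rw [Complex.norm_real, norm_norm]
    rw [hc]
    nlinarith [h u hu1, norm_nonneg (⟪A u, u⟫), norm_nonneg x, norm_nonneg (A u)]

/-- For a self-adjoint operator, the operator norm is bounded by the numerical radius. -/
lemma aux_norm_le_of_selfAdjoint (A : H →L[ℂ] H) (hA : adjoint A = A) (M : ℝ) (hM : 0 ≤ M)
    (h : ∀ x : H, ‖x‖ = 1 → ‖⟪A x, x⟫‖ ≤ M) : ‖A‖ ≤ M := by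
  have h' := aux_inner_scale A M h
  -- polarization bound on Re ⟪A x, y⟫ for unit vectors
  have hre : ∀ x y : H, ‖x‖ = 1 → ‖y‖ = 1 → (⟪A x, y⟫).re ≤ M := by
    intro x y hx hy
    have hconj : ⟪A y, x⟫ = starRingEnd ℂ ⟪A x, y⟫ := by
      rw [inner_conj_symm]
      conv_lhs => rw [← hA]
      exact adjoint_inner_left A x y
    have hexp : ⟪A (x + y), x + y⟫ - ⟪A (x - y), x - y⟫
        = 2 * (⟪A x, y⟫ + ⟪A y, x⟫) := by
      rw [map_add, map_sub, inner_add_left, inner_add_right, inner_add_right,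
        inner_sub_left, inner_sub_right, inner_sub_right]
      ring
    have hgen : ∀ z : ℂ, (2 * (z + (starRingEnd ℂ) z)).re = 4 * z.re := by
      intro z
      rw [Complex.add_conj]
      norm_num
      ring
    have hre2 : (⟪A (x + y), x + y⟫ - ⟪A (x - y), x - y⟫).re = 4 * (⟪A x, y⟫).re := by
      rw [hexp, hconj]; exact hgen _
    have b1 : (⟪A (x + y), x + y⟫).re ≤ M * ‖x + y‖ ^ 2 :=
      le_trans (le_abs_self _) (le_trans (aux_re_le_norm _) (h' (x + y)))
    have b2 : -(M * ‖x - y‖ ^ 2) ≤ (⟪A (x - y), x - y⟫).re :=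
      (abs_le.mp (le_trans (aux_re_le_norm _) (h' (x - y)))).1
    have h4 : ‖x + y‖ ^ 2 + ‖x - y‖ ^ 2 = 4 := by
      have hp := parallelogram_law_with_norm ℂ x y
      rw [hx, hy] at hp
      nlinarith [hp]
    have hsum : 4 * (⟪A x, y⟫).re ≤ M * ‖x + y‖ ^ 2 + M * ‖x - y‖ ^ 2 := by
      rw [← hre2, Complex.sub_re]
      linarith
    have hM4 : M * ‖x + y‖ ^ 2 + M * ‖x - y‖ ^ 2 = 4 * M := by
      rw [← mul_add, h4]; ring
    linarith
  -- norm bound on unit vectors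
  have hunit : ∀ u : H, ‖u‖ = 1 → ‖A u‖ ≤ M := by
    intro u hu
    rcases eq_or_ne (A u) 0 with h0 | h0
    · rw [h0, norm_zero]; exact hM
    · have hnAu : ‖A u‖ ≠ 0 := norm_ne_zero_iff.mpr h0
      have hnAuc : ((‖A u‖ : ℝ) : ℂ) ≠ 0 := by exact_mod_cast hnAu
      set y : H := (((‖A u‖ : ℝ) : ℂ))⁻¹ • A u with hy
      have hy1 : ‖y‖ = 1 := by
        rw [hy, norm_smul, norm_inv, Complex.norm_real, norm_norm, inv_mul_cancel₀ hnAu]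
      have hval : ⟪A u, y⟫ = ((‖A u‖ : ℝ) : ℂ) := by
        rw [hy, inner_smul_right, inner_self_eq_norm_sq_to_K]
        field_simp
        rfl
      have hrey : (⟪A u, y⟫).re = ‖A u‖ := by rw [hval, Complex.ofReal_re]
      have := hre u y hu hy1
      rw [hrey] at this
      exact this
  refine A.opNorm_le_bound hM ?_
  intro x
  rcases eq_or_ne x 0 with rfl | hx
  · simp
  · have hn : ‖x‖ ≠ 0 := norm_ne_zero_iff.mpr hx
    have hnc : ((‖x‖ : ℝ) : ℂ) ≠ 0 := by exact_mod_cast hn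
    set u : H := (((‖x‖ : ℝ) : ℂ))⁻¹ • x with hu
    have hu1 : ‖u‖ = 1 := by
      rw [hu, norm_smul, norm_inv, Complex.norm_real, norm_norm, inv_mul_cancel₀ hn]
    have hxu : x = ((‖x‖ : ℝ) : ℂ) • u := by
      rw [hu, smul_smul, mul_inv_cancel₀ hnc, one_smul]
    calc ‖A x‖ = ‖x‖ * ‖A u‖ := by
          conv_lhs => rw [hxu]
          rw [map_smul, norm_smul, Complex.norm_real, norm_norm]
      _ ≤ ‖x‖ * M := mul_le_mul_of_nonneg_left (hunit u hu1) (norm_nonneg x)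
      _ = M * ‖x‖ := mul_comm _ _

/-- Kittaneh's inequality: (1/4)‖T*T+TT*‖ ≤ w(T)² ≤ (1/2)‖T*T+TT*‖. -/
theorem kittaneh_numRadius_sq_bounds (T : H →L[ℂ] H) :
    (1 / 4) * ‖adjoint T * T + T * adjoint T‖ ≤ numRadius T ^ 2 ∧
      numRadius T ^ 2 ≤ (1 / 2) * ‖adjoint T * T + T * adjoint T‖ := by
  set S : H →L[ℂ] H := adjoint T with hS
  set A : H →L[ℂ] H := (2⁻¹ : ℂ) • (T + S) with hAdef
  set B : H →L[ℂ] H := ((2⁻¹ : ℂ) * Complex.I) • (S - T) with hBdef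
  have hstarT : star T = S := star_eq_adjoint T
  have hstarS : star S = T := by rw [hS, star_eq_adjoint, adjoint_adjoint]
  have hA : adjoint A = A := by
    rw [hAdef, ← star_eq_adjoint, star_smul, star_add, hstarT, hstarS,
      show star (2⁻¹ : ℂ) = (2⁻¹ : ℂ) from by norm_num, add_comm]
  have hB : adjoint B = B := by
    rw [hBdef, ← star_eq_adjoint, star_smul, star_sub, hstarS, hstarT,
      show star ((2⁻¹ : ℂ) * Complex.I) = -((2⁻¹ : ℂ) * Complex.I) from by
        simp [Complex.ext_iff],
      neg_smul, ← smul_neg, neg_sub]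
  -- algebraic identity
  have hA2 : A * A = (4⁻¹ : ℂ) • ((T + S) * (T + S)) := by
    rw [hAdef, smul_mul_smul_comm]
    norm_num
  have hB2 : B * B = -(4⁻¹ : ℂ) • ((S - T) * (S - T)) := by
    rw [hBdef, smul_mul_smul_comm,
      show ((2⁻¹ : ℂ) * Complex.I) * ((2⁻¹ : ℂ) * Complex.I) = -(4⁻¹ : ℂ) from by
        rw [mul_mul_mul_comm, Complex.I_mul_I]; norm_num]
  have key : S * T + T * S = (2 : ℂ) • (A * A + B * B) := by
    rw [hA2, hB2]
    simp only [mul_add, add_mul, mul_sub, sub_mul]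
    module
  have hnorm_eq : ‖S * T + T * S‖ = 2 * ‖A * A + B * B‖ := by
    rw [key, norm_smul]
    norm_num
  -- numerical radius facts
  have hbdd : BddAbove (Set.range fun x : {x : H // ‖x‖ = 1} => ‖⟪T x.1, x.1⟫‖) := by
    refine ⟨‖T‖, ?_⟩
    rintro r ⟨x, rfl⟩
    have h1 := norm_inner_le_norm (𝕜 := ℂ) (T x.1) x.1
    have h2 := T.le_opNorm x.1
    rw [x.2] at h1 h2
    simpa using h1.trans (by simpa using h2)
  have hw0 : 0 ≤ numRadius T := Real.iSup_nonneg fun x => norm_nonneg _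
  have hle : ∀ x : H, ‖x‖ = 1 → ‖⟪T x, x⟫‖ ≤ numRadius T := fun x hx =>
    le_ciSup hbdd (⟨x, hx⟩ : {x : H // ‖x‖ = 1})
  -- inner product values of A and B
  have hSx : ∀ x : H, ⟪S x, x⟫ = starRingEnd ℂ ⟪T x, x⟫ := by
    intro x
    rw [hS, adjoint_inner_left, inner_conj_symm]
  have hAx : ∀ x : H, ⟪A x, x⟫ = (((⟪T x, x⟫).re : ℝ) : ℂ) := by
    intro x
    rw [hAdef]
    simp only [ContinuousLinearMap.smul_apply, ContinuousLinearMap.add_apply]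
    rw [inner_smul_left, inner_add_left, hSx x,
      show starRingEnd ℂ (2⁻¹ : ℂ) = (2⁻¹ : ℂ) from by simp [Complex.ext_iff], Complex.add_conj]
    push_cast
    ring
  have hBx : ∀ x : H, ⟪B x, x⟫ = -(((⟪T x, x⟫).im : ℝ) : ℂ) := by
    intro x
    rw [hBdef]
    simp only [ContinuousLinearMap.smul_apply, ContinuousLinearMap.sub_apply]
    rw [inner_smul_left, inner_sub_left, hSx x]
    have h1 : starRingEnd ℂ ⟪T x, x⟫ - ⟪T x, x⟫
        = -(2 * (((⟪T x, x⟫).im : ℝ) : ℂ) * Complex.I) := by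
      rw [← neg_sub, Complex.sub_conj]
      push_cast
      ring
    rw [h1, show starRingEnd ℂ ((2⁻¹ : ℂ) * Complex.I) = -((2⁻¹ : ℂ) * Complex.I) from by
      simp [Complex.ext_iff]]
    linear_combination ((((⟪T x, x⟫).im : ℝ) : ℂ)) * Complex.I_mul_I
  -- lower bound: ‖A‖, ‖B‖ ≤ w(T)
  have hAw : ‖A‖ ≤ numRadius T := by
    refine aux_norm_le_of_selfAdjoint A hA _ hw0 fun x hx => ?_
    rw [hAx x, Complex.norm_real, Real.norm_eq_abs]
    exact (aux_re_le_norm _).trans (hle x hx)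
  have hBw : ‖B‖ ≤ numRadius T := by
    refine aux_norm_le_of_selfAdjoint B hB _ hw0 fun x hx => ?_
    rw [hBx x, norm_neg, Complex.norm_real, Real.norm_eq_abs]
    have him : |(⟪T x, x⟫).im| ≤ ‖⟪T x, x⟫‖ := by
      exact Complex.abs_im_le_norm _
    exact him.trans (hle x hx)
  -- upper bound per unit vector
  have hupper : ∀ x : H, ‖x‖ = 1 → ‖⟪T x, x⟫‖ ^ 2 ≤ ‖A * A + B * B‖ := by
    intro x hx
    set z : ℂ := ⟪T x, x⟫ with hz
    have hz2 : ‖z‖ ^ 2 = z.re ^ 2 + z.im ^ 2 := by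
      rw [Complex.sq_norm, Complex.normSq_apply]; ring
    have hreA : |z.re| ≤ ‖A x‖ := by
      have h1 := norm_inner_le_norm (𝕜 := ℂ) (A x) x
      rw [hx, mul_one, hAx x, Complex.norm_real, Real.norm_eq_abs] at h1
      exact h1
    have himB : |z.im| ≤ ‖B x‖ := by
      have h1 := norm_inner_le_norm (𝕜 := ℂ) (B x) x
      rw [hx, mul_one, hBx x, norm_neg, Complex.norm_real, Real.norm_eq_abs] at h1
      exact h1
    have hAA : (⟪(A * A) x, x⟫).re = ‖A x‖ ^ 2 := by
      rw [ContinuousLinearMap.mul_apply]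
      conv_lhs => rw [show A (A x) = adjoint A (A x) from by rw [hA]]
      rw [adjoint_inner_left, inner_self_eq_norm_sq_to_K]
      norm_cast
    have hBB : (⟪(B * B) x, x⟫).re = ‖B x‖ ^ 2 := by
      rw [ContinuousLinearMap.mul_apply]
      conv_lhs => rw [show B (B x) = adjoint B (B x) from by rw [hB]]
      rw [adjoint_inner_left, inner_self_eq_norm_sq_to_K]
      norm_cast
    have hsum : ‖A x‖ ^ 2 + ‖B x‖ ^ 2 = (⟪(A * A + B * B) x, x⟫).re := by
      rw [ContinuousLinearMap.add_apply, inner_add_left, Complex.add_re, hAA, hBB]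
    have hfin : (⟪(A * A + B * B) x, x⟫).re ≤ ‖A * A + B * B‖ := by
      have h1 := (aux_re_le_norm (⟪(A * A + B * B) x, x⟫)).trans
        (norm_inner_le_norm (𝕜 := ℂ) ((A * A + B * B) x) x)
      have h2 := (A * A + B * B).le_opNorm x
      rw [hx, mul_one] at h1 h2
      exact (le_abs_self _).trans (h1.trans h2)
    nlinarith [sq_abs z.re, sq_abs z.im, abs_nonneg z.re, abs_nonneg z.im,
      norm_nonneg (A x), norm_nonneg (B x), hreA, himB]
  constructor
  · -- lower bound
    have h1 : ‖S * T + T * S‖ ≤ 4 * numRadius T ^ 2 := by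
      have hAA := norm_mul_le A A
      have hBB := norm_mul_le B B
      have htri := norm_add_le (A * A) (B * B)
      nlinarith [norm_nonneg A, norm_nonneg B, hAw, hBw, hnorm_eq]
    linarith
  · -- upper bound
    have hwle : numRadius T ≤ Real.sqrt ‖A * A + B * B‖ := by
      refine Real.iSup_le (fun x => ?_) (Real.sqrt_nonneg _)
      exact (Real.le_sqrt (norm_nonneg _) (norm_nonneg _)).mpr (hupper x.1 x.2)
    have hsq : numRadius T ^ 2 ≤ ‖A * A + B * B‖ := by
      calc numRadius T ^ 2 ≤ Real.sqrt ‖A * A + B * B‖ ^ 2 :=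
            pow_le_pow_left₀ hw0 hwle 2
        _ = ‖A * A + B * B‖ := Real.sq_sqrt (norm_nonneg _)
    linarith
end

section
/- For a bounded linear operator T on a complex Hilbert space, w(T)⁴ ≤ (1/2)·w(T²)² + (1/8)·‖T*T + TT*‖². -/
open scoped NNReal ENNReal
open ContinuousLinearMap

set_option synthInstance.maxHeartbeats 1000000
set_option maxHeartbeats 1000000


variable {H : Type*} [NormedAddCommGroup H] [InnerProductSpace ℂ H] [CompleteSpace H]

set_option linter.unusedSectionVars false

lemma numRadius_nonneg (T : H →L[ℂ] H) : 0 ≤ numRadius T :=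
  Real.iSup_nonneg fun _ => norm_nonneg _

lemma inner_le_numRadius (T : H →L[ℂ] H) (x : H) (hx : ‖x‖ = 1) :
    ‖(inner ℂ (T x) x : ℂ)‖ ≤ numRadius T := by
  have hb : BddAbove (Set.range fun y : {z : H // ‖z‖ = 1} =>
      ‖(inner ℂ (T (y : H)) (y : H) : ℂ)‖) := by
    refine ⟨‖T‖, ?_⟩
    rintro r ⟨y, rfl⟩
    have h1 : ‖(inner ℂ (T (y : H)) (y : H) : ℂ)‖ ≤ ‖T (y : H)‖ * ‖(y : H)‖ :=
      norm_inner_le_norm _ _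
    have h2 : ‖T (y : H)‖ ≤ ‖T‖ * ‖(y : H)‖ := T.le_opNorm _
    have h3 : ‖(y : H)‖ = 1 := y.2
    rw [h3] at h1 h2
    simpa using h1.trans (by simpa using h2)
  exact le_ciSup hb (⟨x, hx⟩ : {z : H // ‖z‖ = 1})

/-- For a self-adjoint operator, the operator norm is bounded by any bound on the
numerical range over unit vectors. -/
lemma selfadj_norm_le {A : H →L[ℂ] H} (hA : adjoint A = A) {M : ℝ} (hM : 0 ≤ M)
    (h : ∀ z : H, ‖z‖ = 1 → ‖(inner ℂ (A z) z : ℂ)‖ ≤ M) : ‖A‖ ≤ M := by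
  -- homogeneous bound
  have h' : ∀ z : H, ‖(inner ℂ (A z) z : ℂ)‖ ≤ M * ‖z‖ ^ 2 := by
    intro z
    rcases eq_or_ne z 0 with rfl | hz
    · simp
    have hnz : (‖z‖ : ℝ) ≠ 0 := norm_ne_zero_iff.mpr hz
    set w : H := ((‖z‖ : ℂ))⁻¹ • z with hw
    have hwz : z = ((‖z‖ : ℂ)) • w := by
      rw [hw, smul_inv_smul₀ (by exact_mod_cast hnz)]
    have hw1 : ‖w‖ = 1 := by
      rw [hw, norm_smul]
      simp [hnz]
    have hkey := h w hw1
    have hcomp : (inner ℂ (A z) z : ℂ)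
        = (‖z‖ : ℂ) * ((starRingEnd ℂ) (‖z‖ : ℂ) * inner ℂ (A w) w) := by
      conv_lhs => rw [hwz]
      rw [map_smul, inner_smul_left, inner_smul_right]
      ring
    rw [hcomp]
    rw [norm_mul, norm_mul]
    simp only [Complex.norm_real, RCLike.norm_conj, Real.norm_eq_abs, abs_norm]
    calc ‖z‖ * (‖z‖ * ‖(inner ℂ (A w) w : ℂ)‖) ≤ ‖z‖ * (‖z‖ * M) := by
          have := norm_nonneg z
          gcongr
      _ = M * ‖z‖ ^ 2 := by ring
  -- symmetry
  have hsym : ∀ a b : H, (inner ℂ (A a) b : ℂ) = (starRingEnd ℂ) (inner ℂ (A b) a) := by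
    intro a b
    have h1 := adjoint_inner_left A a b
    rw [hA] at h1
    rw [h1]
    exact (inner_conj_symm _ _).symm
  -- polarization identity for the real part
  have hre : ∀ a b : H, 4 * Complex.re (inner ℂ (A a) b : ℂ)
      = Complex.re (inner ℂ (A (a + b)) (a + b) : ℂ)
        - Complex.re (inner ℂ (A (a - b)) (a - b) : ℂ) := by
    intro a b
    have e1 : (inner ℂ (A (a + b)) (a + b) : ℂ)
        = inner ℂ (A a) a + inner ℂ (A a) b + inner ℂ (A b) a + inner ℂ (A b) b := by
      rw [map_add]
      rw [inner_add_left, inner_add_right, inner_add_right]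
      ring
    have e2 : (inner ℂ (A (a - b)) (a - b) : ℂ)
        = inner ℂ (A a) a - inner ℂ (A a) b - inner ℂ (A b) a + inner ℂ (A b) b := by
      rw [map_sub]
      rw [inner_sub_left, inner_sub_right, inner_sub_right]
      ring
    have e3 : Complex.re ((inner ℂ (A b) a : ℂ)) = Complex.re ((inner ℂ (A a) b : ℂ)) := by
      rw [hsym b a]
      exact Complex.conj_re _
    rw [e1, e2]
    simp only [Complex.add_re, Complex.sub_re]
    rw [e3]
    ring
  have hbound : ∀ a b : H, Complex.re (inner ℂ (A a) b : ℂ)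
      ≤ M / 2 * (‖a‖ ^ 2 + ‖b‖ ^ 2) := by
    intro a b
    have h1 := h' (a + b)
    have h2 := h' (a - b)
    have r1 : Complex.re (inner ℂ (A (a + b)) (a + b) : ℂ)
        ≤ ‖(inner ℂ (A (a + b)) (a + b) : ℂ)‖ := Complex.re_le_norm _
    have r2 : -Complex.re (inner ℂ (A (a - b)) (a - b) : ℂ)
        ≤ ‖(inner ℂ (A (a - b)) (a - b) : ℂ)‖ := by
      have habs : |Complex.re (inner ℂ (A (a - b)) (a - b) : ℂ)|
          ≤ ‖(inner ℂ (A (a - b)) (a - b) : ℂ)‖ := Complex.abs_re_le_norm _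
      linarith [neg_abs_le (Complex.re (inner ℂ (A (a - b)) (a - b) : ℂ))]
    have hpar : ‖a + b‖ * ‖a + b‖ + ‖a - b‖ * ‖a - b‖
        = 2 * (‖a‖ * ‖a‖ + ‖b‖ * ‖b‖) := parallelogram_law_with_norm_mul ℂ a b
    have := hre a b
    nlinarith [sq_nonneg (‖a + b‖), sq_nonneg (‖a - b‖)]
  refine A.opNorm_le_bound hM ?_
  intro z
  rcases eq_or_ne (A z) 0 with hAz | hAz
  · rw [hAz]
    simp only [norm_zero]
    positivity
  have hAzn : (0 : ℝ) < ‖A z‖ := norm_pos_iff.mpr hAz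
  rcases eq_or_ne z 0 with rfl | hz
  · simp at hAz
  have hzn : (0 : ℝ) < ‖z‖ := norm_pos_iff.mpr hz
  set y : H := (((‖z‖ / ‖A z‖ : ℝ)) : ℂ) • A z with hy
  have hyn : ‖y‖ = ‖z‖ := by
    rw [hy, norm_smul]
    simp only [Complex.norm_real, Real.norm_eq_abs]
    rw [abs_of_pos (div_pos hzn hAzn)]
    rw [div_mul_cancel₀ _ (ne_of_gt hAzn)]
  have hreAy : Complex.re (inner ℂ (A z) y : ℂ) = (‖z‖ / ‖A z‖) * ‖A z‖ ^ 2 := by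
    rw [hy, inner_smul_right, Complex.re_ofReal_mul]
    congr 1
    exact inner_self_eq_norm_sq (𝕜 := ℂ) (A z)
  have hb := hbound z y
  rw [hreAy, hyn] at hb
  have heq : ‖z‖ / ‖A z‖ * ‖A z‖ ^ 2 = ‖z‖ * ‖A z‖ := by
    field_simp
  rw [heq] at hb
  have h2 : ‖z‖ * ‖A z‖ ≤ M * ‖z‖ ^ 2 := by nlinarith
  nlinarith

lemma key_pointwise (T : H →L[ℂ] H) (x : H) (hx : ‖x‖ = 1) :
    ‖(inner ℂ (T x) x : ℂ)‖ ^ 4 ≤ (1 / 2) * numRadius (T ^ 2) ^ 2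
      + (1 / 8) * ‖adjoint T * T + T * adjoint T‖ ^ 2 := by
  set c : ℂ := inner ℂ (T x) x with hc
  set a : ℝ := ‖c‖ with ha
  have ha0 : 0 ≤ a := norm_nonneg _
  set u : ℂ := if c = 0 then 1 else c / (‖c‖ : ℂ) with hu
  have hun : ‖u‖ = 1 := by
    rw [hu]
    split_ifs with h
    · simp
    · rw [norm_div]
      simp only [Complex.norm_real, Real.norm_eq_abs, abs_norm]
      exact div_self (norm_ne_zero_iff.mpr h)
  have huc : (starRingEnd ℂ) u * c = (a : ℂ) := by
    rw [hu]
    split_ifs with h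
    · simp [ha, h]
    · have hcn : (‖c‖ : ℂ) ≠ 0 := by
        exact_mod_cast norm_ne_zero_iff.mpr h
      have h1 : (starRingEnd ℂ) (c / (‖c‖ : ℂ)) = (starRingEnd ℂ) c / (‖c‖ : ℂ) := by
        rw [map_div₀, Complex.conj_ofReal]
      rw [h1, div_mul_eq_mul_div, mul_comm, Complex.mul_conj, Complex.normSq_eq_norm_sq, ha]
      push_cast
      rw [sq, mul_div_assoc, div_self hcn, mul_one]
  have hu1 : u * (starRingEnd ℂ) u = 1 := by
    rw [Complex.mul_conj, Complex.normSq_eq_norm_sq, hun]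
    norm_num
  have hu1' : (starRingEnd ℂ) u * u = 1 := by rw [mul_comm] at hu1; exact hu1
  have hu2 : u * (starRingEnd ℂ) c = (a : ℂ) := by
    have h := congrArg (starRingEnd ℂ) huc
    rw [map_mul, Complex.conj_conj, Complex.conj_ofReal] at h
    exact h
  set P : H →L[ℂ] H := u • T with hP
  set Q : H →L[ℂ] H := (starRingEnd ℂ) u • adjoint T with hQ
  set A : H →L[ℂ] H := P + Q with hA
  set B : H →L[ℂ] H := P - Q with hB
  set C : H →L[ℂ] H := P * P + Q * Q with hCdef
  set D : H →L[ℂ] H := adjoint T * T + T * adjoint T with hD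
  have hPQ : P * Q = T * adjoint T := by
    rw [hP, hQ, smul_mul_smul_comm, hu1, one_smul]
  have hQP : Q * P = adjoint T * T := by
    rw [hP, hQ, smul_mul_smul_comm, hu1', one_smul]
  have hA2 : A * A = C + D := by
    rw [hA, hCdef, hD, add_mul, mul_add, mul_add, hPQ, hQP]
    abel
  have hB2 : B * B = C - D := by
    rw [hB, hCdef, hD, sub_mul, mul_sub, mul_sub, hPQ, hQP]
    abel
  have hstarP : star P = Q := by
    rw [hP, hQ, star_smul, star_eq_adjoint]
    rfl
  have hstarQ : star Q = P := by
    rw [hP, hQ, star_smul, ← star_eq_adjoint, star_star]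
    simp
  have hadjA : adjoint A = A := by
    rw [← star_eq_adjoint, hA, star_add, hstarP, hstarQ]
    exact add_comm Q P
  have hadjC : adjoint C = C := by
    rw [← star_eq_adjoint, hCdef, star_add, star_mul, star_mul, hstarP, hstarQ]
    exact add_comm (Q * Q) (P * P)
  -- step 1 : 2a ≤ ‖A x‖
  have hadjTx : (inner ℂ (adjoint T x) x : ℂ) = (starRingEnd ℂ) c := by
    rw [adjoint_inner_left, hc]
    exact (inner_conj_symm _ _).symm
  have step1 : 2 * a ≤ ‖A x‖ := by
    have hinner : (inner ℂ (A x) x : ℂ) = 2 * (a : ℂ) := by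
      rw [hA, add_apply, inner_add_left, hP, hQ, smul_apply, smul_apply,
        inner_smul_left, inner_smul_left, hadjTx, ← hc, huc, Complex.conj_conj, hu2]
      ring
    have hre : Complex.re (inner ℂ (A x) x : ℂ) = 2 * a := by
      rw [hinner]
      simp
    have hle : Complex.re (inner ℂ (A x) x : ℂ) ≤ ‖(inner ℂ (A x) x : ℂ)‖ :=
      Complex.re_le_norm _
    have hcs : ‖(inner ℂ (A x) x : ℂ)‖ ≤ ‖A x‖ * ‖x‖ := norm_inner_le_norm _ _
    rw [hx, mul_one] at hcs
    linarith
  -- step 2 : ‖A x‖ ^ 2 ≤ ‖(A * A) x‖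
  have step2 : ‖A x‖ ^ 2 ≤ ‖(A * A) x‖ := by
    have he : (inner ℂ ((A * A) x) x : ℂ) = inner ℂ (A x) (A x) := by
      rw [ContinuousLinearMap.mul_apply]
      conv_lhs => rw [← hadjA]
      rw [adjoint_inner_left, hadjA]
    have hre : Complex.re (inner ℂ ((A * A) x) x : ℂ) = ‖A x‖ ^ 2 := by
      rw [he]
      exact inner_self_eq_norm_sq (𝕜 := ℂ) (A x)
    have hle : Complex.re (inner ℂ ((A * A) x) x : ℂ) ≤ ‖(inner ℂ ((A * A) x) x : ℂ)‖ :=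
      Complex.re_le_norm _
    have hcs : ‖(inner ℂ ((A * A) x) x : ℂ)‖ ≤ ‖(A * A) x‖ * ‖x‖ := norm_inner_le_norm _ _
    rw [hx, mul_one] at hcs
    linarith
  -- parallelogram
  have hpar : ‖(A * A) x‖ * ‖(A * A) x‖ + ‖(B * B) x‖ * ‖(B * B) x‖
      = 2 * (‖C x‖ * ‖C x‖ + ‖D x‖ * ‖D x‖) := by
    rw [hA2, hB2, add_apply, sub_apply]
    exact parallelogram_law_with_norm_mul ℂ (C x) (D x)
  -- bound for C
  have hCnorm : ‖C‖ ≤ 2 * numRadius (T ^ 2) := by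
    have hnr := numRadius_nonneg (T ^ 2)
    refine selfadj_norm_le hadjC (by linarith) ?_
    intro z hz
    have hPP : P * P = (u * u) • (T ^ 2) := by
      rw [hP, smul_mul_smul_comm, sq]
    have hQQ : Q * Q = ((starRingEnd ℂ) u * (starRingEnd ℂ) u) • adjoint (T ^ 2) := by
      rw [hQ, smul_mul_smul_comm]
      congr 1
      rw [← star_eq_adjoint T, ← star_eq_adjoint (T ^ 2), sq, star_mul]
    set w : ℂ := inner ℂ ((T ^ 2) z) z with hw
    have hadjT2z : (inner ℂ (adjoint (T ^ 2) z) z : ℂ) = (starRingEnd ℂ) w := by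
      rw [adjoint_inner_left, hw]
      exact (inner_conj_symm _ _).symm
    have h1 : (inner ℂ ((P * P) z) z : ℂ) = (starRingEnd ℂ) (u * u) * w := by
      rw [hPP, smul_apply, inner_smul_left, hw]
    have h2 : (inner ℂ ((Q * Q) z) z : ℂ)
        = (starRingEnd ℂ) ((starRingEnd ℂ) (u * u) * w) := by
      rw [hQQ, smul_apply, inner_smul_left, hadjT2z]
      simp only [map_mul, Complex.conj_conj]
    have hCz : (inner ℂ (C z) z : ℂ)
        = (starRingEnd ℂ) (u * u) * w + (starRingEnd ℂ) ((starRingEnd ℂ) (u * u) * w) := by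
      rw [hCdef, add_apply, inner_add_left, h1, h2]
    have hnv : ‖(starRingEnd ℂ) (u * u) * w‖ = ‖w‖ := by
      rw [norm_mul, RCLike.norm_conj, norm_mul, hun]
      norm_num
    have hwle : ‖w‖ ≤ numRadius (T ^ 2) := inner_le_numRadius (T ^ 2) z hz
    calc ‖(inner ℂ (C z) z : ℂ)‖
        ≤ ‖(starRingEnd ℂ) (u * u) * w‖ + ‖(starRingEnd ℂ) ((starRingEnd ℂ) (u * u) * w)‖ := by
          rw [hCz]; exact norm_add_le _ _
      _ = 2 * ‖w‖ := by rw [RCLike.norm_conj, hnv]; ring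
      _ ≤ 2 * numRadius (T ^ 2) := by linarith
  have hCx : ‖C x‖ ≤ 2 * numRadius (T ^ 2) := by
    have := C.le_opNorm x
    rw [hx, mul_one] at this
    linarith
  have hDx : ‖D x‖ ≤ ‖D‖ := by
    have := D.le_opNorm x
    rw [hx, mul_one] at this
    linarith
  -- assemble
  have h16 : (2 * a) ^ 4 ≤ ‖(A * A) x‖ ^ 2 := by
    have h1 : (2 * a) ^ 2 ≤ ‖A x‖ ^ 2 := by
      have := pow_le_pow_left₀ (by linarith) step1 2
      linarith
    have h2 : ((2 * a) ^ 2) ^ 2 ≤ (‖A x‖ ^ 2) ^ 2 := by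
      have := pow_le_pow_left₀ (by positivity) h1 2
      linarith
    have h3 : (‖A x‖ ^ 2) ^ 2 ≤ ‖(A * A) x‖ ^ 2 := by
      have := pow_le_pow_left₀ (by positivity) step2 2
      linarith
    calc (2 * a) ^ 4 = ((2 * a) ^ 2) ^ 2 := by ring
      _ ≤ (‖A x‖ ^ 2) ^ 2 := h2
      _ ≤ ‖(A * A) x‖ ^ 2 := h3
  have hfinal : 16 * a ^ 4 ≤ 8 * numRadius (T ^ 2) ^ 2 + 2 * ‖D‖ ^ 2 := by
    have hnr := numRadius_nonneg (T ^ 2)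
    have hD0 : (0:ℝ) ≤ ‖D‖ := norm_nonneg _
    have hCx0 : (0:ℝ) ≤ ‖C x‖ := norm_nonneg _
    have hDx0 : (0:ℝ) ≤ ‖D x‖ := norm_nonneg _
    nlinarith [sq_nonneg (‖(B * B) x‖), h16, hpar, hCx, hDx,
      mul_self_nonneg (‖(B * B) x‖)]
  rw [hD] at hfinal
  linarith

/-- w(T)⁴ ≤ (1/2)w(T²)² + (1/8)‖T*T + TT*‖². -/
theorem numRadius_pow_four_le_sq_bound (T : H →L[ℂ] H) :
    numRadius T ^ 4 ≤ (1 / 2) * numRadius (T ^ 2) ^ 2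
      + (1 / 8) * ‖adjoint T * T + T * adjoint T‖ ^ 2 := by
  set S : ℝ := (1 / 2) * numRadius (T ^ 2) ^ 2
      + (1 / 8) * ‖adjoint T * T + T * adjoint T‖ ^ 2 with hS
  have hS0 : 0 ≤ S := by
    rw [hS]
    have := numRadius_nonneg (T ^ 2)
    positivity
  have hroot : numRadius T ≤ Real.sqrt (Real.sqrt S) := by
    refine Real.iSup_le ?_ (Real.sqrt_nonneg _)
    rintro ⟨x, hx⟩
    have hkey := key_pointwise T x hx
    rw [← hS] at hkey
    have h4 : (‖(inner ℂ (T x) x : ℂ)‖ ^ 2) ^ 2 ≤ S := by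
      calc (‖(inner ℂ (T x) x : ℂ)‖ ^ 2) ^ 2 = ‖(inner ℂ (T x) x : ℂ)‖ ^ 4 := by ring
        _ ≤ S := hkey
    have h2 : ‖(inner ℂ (T x) x : ℂ)‖ ^ 2 ≤ Real.sqrt S :=
      (Real.le_sqrt (by positivity) hS0).mpr h4
    exact (Real.le_sqrt (norm_nonneg _) (Real.sqrt_nonneg _)).mpr h2
  have hpow : Real.sqrt (Real.sqrt S) ^ 4 = S := by
    have : Real.sqrt (Real.sqrt S) ^ 4 = (Real.sqrt (Real.sqrt S) ^ 2) ^ 2 := by ring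
    rw [this, Real.sq_sqrt (Real.sqrt_nonneg S), Real.sq_sqrt hS0]
  calc numRadius T ^ 4 ≤ Real.sqrt (Real.sqrt S) ^ 4 :=
        pow_le_pow_left₀ (numRadius_nonneg T) hroot 4
    _ = S := hpow
end

section
/- For a bounded linear operator T on a complex Hilbert space, (1/4)·m((Re(T²))²) + (1/16)·‖T*T + TT*‖² ≤ w(T)⁴, where m(S) = inf{⟨Sx,x⟩ : ‖x‖=1} is the Crawford number of the positive operator (Re(T²))². -/
open scoped NNReal ENNReal
open ContinuousLinearMap

set_option synthInstance.maxHeartbeats 1000000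
set_option maxHeartbeats 1000000


variable {H : Type*} [NormedAddCommGroup H] [InnerProductSpace ℂ H] [CompleteSpace H]

/-- The Crawford number of a (self-adjoint) operator:
inf of ⟨Sx, x⟩ over unit vectors. -/
noncomputable def crawford (S : H →L[ℂ] H) : ℝ :=
  ⨅ x : {x : H // ‖x‖ = 1}, (inner ℂ (S x) x : ℂ).re

private lemma keyA' (S : H →L[ℂ] H) (hS : IsSelfAdjoint S) (M : ℝ) (hM0 : 0 ≤ M)
    (h : ∀ x : H, ‖x‖ = 1 → |(inner ℂ (S x) x : ℂ).re| ≤ M) : ‖S‖ ≤ M := by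
  have hadj : ∀ x y : H, (inner ℂ (S x) y : ℂ) = inner ℂ x (S y) := by
    intro x y
    conv_rhs => rw [← hS.adjoint_eq]
    rw [ContinuousLinearMap.adjoint_inner_right]
  -- quadratic form bound for all vectors
  have h' : ∀ z : H, |(inner ℂ (S z) z : ℂ).re| ≤ M * ‖z‖ ^ 2 := by
    intro z
    rcases eq_or_ne z 0 with rfl | hz
    · simp
    · have hz' : ‖z‖ ≠ 0 := norm_ne_zero_iff.mpr hz
      set u : H := (‖z‖⁻¹ : ℂ) • z with hu
      have hu1 : ‖u‖ = 1 := by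
        rw [hu, norm_smul]; simp [inv_mul_cancel₀ hz']
      have h1 := h u hu1
      have hinner : (inner ℂ (S u) u : ℂ) = (((‖z‖ ^ 2)⁻¹ : ℝ) : ℂ) * inner ℂ (S z) z := by
        rw [hu, map_smul, inner_smul_left, inner_smul_right]
        simp only [map_inv₀, Complex.conj_ofReal]
        push_cast
        ring
      rw [hinner, Complex.re_ofReal_mul, abs_mul,
        abs_of_nonneg (a := ((‖z‖ ^ 2)⁻¹ : ℝ)) (by positivity)] at h1
      have hz2 : (0:ℝ) < ‖z‖ ^ 2 := by positivity
      calc |(inner ℂ (S z) z : ℂ).re| = ((‖z‖^2)⁻¹ * |(inner ℂ (S z) z : ℂ).re|) * ‖z‖^2 := by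
            field_simp
        _ ≤ M * ‖z‖ ^ 2 := by nlinarith
  -- polarization bound
  have hpol : ∀ x y : H, 4 * (inner ℂ (S x) y : ℂ).re ≤ 2 * M * (‖x‖ ^ 2 + ‖y‖ ^ 2) := by
    intro x y
    have e1 := h' (x + y)
    have e2 := h' (x - y)
    have hre : ((inner ℂ (S y) x : ℂ)).re = ((inner ℂ (S x) y : ℂ)).re := by
      rw [hadj y x, ← inner_conj_symm y (S x)]
      exact Complex.conj_re _
    have expand1 : (inner ℂ (S (x+y)) (x+y) : ℂ).re
        = (inner ℂ (S x) x : ℂ).re + (inner ℂ (S x) y : ℂ).re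
          + (inner ℂ (S y) x : ℂ).re + (inner ℂ (S y) y : ℂ).re := by
      simp only [map_add, inner_add_left, inner_add_right, Complex.add_re]
      ring
    have expand2 : (inner ℂ (S (x-y)) (x-y) : ℂ).re
        = (inner ℂ (S x) x : ℂ).re - (inner ℂ (S x) y : ℂ).re
          - (inner ℂ (S y) x : ℂ).re + (inner ℂ (S y) y : ℂ).re := by
      simp only [map_sub, inner_sub_left, inner_sub_right, Complex.sub_re, Complex.add_re]
      ring
    have hnorm : ‖x + y‖ ^ 2 + ‖x - y‖ ^ 2 = 2 * ‖x‖ ^ 2 + 2 * ‖y‖ ^ 2 := by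
      have := parallelogram_law_with_norm ℂ x y
      nlinarith [this]
    have l1 : (inner ℂ (S (x+y)) (x+y) : ℂ).re ≤ M * ‖x + y‖ ^ 2 := (abs_le.mp e1).2
    have l2 : -(M * ‖x - y‖ ^ 2) ≤ (inner ℂ (S (x-y)) (x-y) : ℂ).re := (abs_le.mp e2).1
    nlinarith [l1, l2, expand1, expand2, hre, hnorm]
  -- conclude
  refine ContinuousLinearMap.opNorm_le_bound S hM0 fun x => ?_
  rcases eq_or_ne (S x) 0 with h0 | h0
  · simp [h0]; positivity
  rcases eq_or_ne x 0 with rfl | hx0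
  · simp at h0
  have hSx : (0:ℝ) < ‖S x‖ := norm_pos_iff.mpr h0
  have hx : (0:ℝ) < ‖x‖ := norm_pos_iff.mpr hx0
  set t : ℝ := ‖x‖ / ‖S x‖ with ht
  have htpos : 0 < t := div_pos hx hSx
  have key := hpol x ((t : ℂ) • S x)
  rw [inner_smul_right, norm_smul] at key
  have hself : (inner ℂ (S x) (S x) : ℂ).re = ‖S x‖ ^ 2 := inner_self_eq_norm_sq (𝕜 := ℂ) (S x)
  rw [Complex.re_ofReal_mul, hself] at key
  have hnt : ‖(t:ℂ)‖ = t := by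
    rw [Complex.norm_real, Real.norm_eq_abs, abs_of_pos htpos]
  rw [hnt] at key
  have h3 : t * ‖S x‖ ^ 2 = ‖x‖ * ‖S x‖ := by
    rw [ht]; field_simp
  have h2 : (t * ‖S x‖) ^ 2 = ‖x‖ ^ 2 := by
    rw [ht]; field_simp
  rw [h3, mul_pow, ← mul_pow, h2] at key
  nlinarith [key, hx, hSx]

private lemma sq_apply_inner (S : H →L[ℂ] H) (hS : IsSelfAdjoint S) (x : H) :
    (inner ℂ ((S ^ 2) x) x : ℂ).re = ‖S x‖ ^ 2 := by
  have h1 : (S ^ 2) x = S (S x) := by simp [pow_two, ContinuousLinearMap.mul_apply]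
  rw [h1, show S (S x) = (ContinuousLinearMap.adjoint S) (S x) by rw [hS.adjoint_eq],
    ContinuousLinearMap.adjoint_inner_left]
  exact inner_self_eq_norm_sq (𝕜 := ℂ) (S x)

private lemma idA (T : H →L[ℂ] H) :
    ((2⁻¹ : ℂ) • (T ^ 2 + star (T ^ 2)))
      = ((2⁻¹ : ℂ) • (T + star T)) ^ 2 - ((Complex.I * 2⁻¹) • (T - star T)) ^ 2 := by
  simp only [pow_two, star_mul, star_mul', smul_mul_smul_comm, sub_mul, mul_sub, add_mul, mul_add,
    smul_sub, smul_add]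
  rw [show (Complex.I * 2⁻¹) * (Complex.I * 2⁻¹) = -(4⁻¹ : ℂ) by
    rw [mul_mul_mul_comm, Complex.I_mul_I]; norm_num,
    show ((2⁻¹ : ℂ)) * 2⁻¹ = (4⁻¹ : ℂ) by norm_num]
  module

private lemma idD (T : H →L[ℂ] H) :
    star T * T + T * star T
      = (2 : ℂ) • (((2⁻¹ : ℂ) • (T + star T)) ^ 2 + ((Complex.I * 2⁻¹) • (T - star T)) ^ 2) := by
  simp only [pow_two, smul_mul_smul_comm, sub_mul, mul_sub, add_mul, mul_add,
    smul_sub, smul_add]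
  rw [show (Complex.I * 2⁻¹) * (Complex.I * 2⁻¹) = -(4⁻¹ : ℂ) by
    rw [mul_mul_mul_comm, Complex.I_mul_I]; norm_num,
    show ((2⁻¹ : ℂ)) * 2⁻¹ = (4⁻¹ : ℂ) by norm_num]
  module


/-- (1/4)m((Re(T²))²) + (1/16)‖T*T+TT*‖² ≤ w(T)⁴. -/
theorem crawford_lower_bound_numRadius_pow_four (T : H →L[ℂ] H) :
    (1 / 4) * crawford (((2⁻¹ : ℂ) • (T ^ 2 + adjoint (T ^ 2))) ^ 2)
      + (1 / 16) * ‖adjoint T * T + T * adjoint T‖ ^ 2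
      ≤ numRadius T ^ 4 := by
  rw [← ContinuousLinearMap.star_eq_adjoint (T ^ 2), ← ContinuousLinearMap.star_eq_adjoint T]
  by_cases hH : Nontrivial H
  case neg =>
    have hsub : Subsingleton H := not_nontrivial_iff_subsingleton.mp hH
    have hempty : IsEmpty {x : H // ‖x‖ = 1} := by
      constructor
      rintro ⟨x, hx⟩
      rw [Subsingleton.elim x 0] at hx
      simp at hx
    have hT0 : ∀ S : H →L[ℂ] H, S = 0 := fun S => by
      ext x; exact Subsingleton.elim _ _
    rw [crawford, Real.iInf_of_isEmpty, numRadius, Real.iSup_of_isEmpty,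
      hT0 (star T * T + T * star T)]
    norm_num
  case pos =>
    obtain ⟨x₀, hx₀⟩ := exists_norm_eq H (zero_le_one (α := ℝ))
    set w := numRadius T with hw
    -- numerical radius facts
    have hbdd : BddAbove (Set.range fun x : {x : H // ‖x‖ = 1} => ‖(inner ℂ (T x) x : ℂ)‖) := by
      refine ⟨‖T‖, ?_⟩
      rintro - ⟨x, rfl⟩
      calc ‖(inner ℂ (T x.1) x.1 : ℂ)‖ ≤ ‖T x.1‖ * ‖x.1‖ := norm_inner_le_norm _ _
        _ ≤ (‖T‖ * ‖x.1‖) * ‖x.1‖ := by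
            have := T.le_opNorm x.1
            nlinarith [norm_nonneg x.1]
        _ = ‖T‖ := by rw [x.2]; ring
    have hwle : ∀ x : {x : H // ‖x‖ = 1}, ‖(inner ℂ (T x.1) x.1 : ℂ)‖ ≤ w :=
      fun x => le_ciSup hbdd x
    have hw0 : 0 ≤ w := le_trans (norm_nonneg _) (hwle ⟨x₀, hx₀⟩)
    -- the two self-adjoint parts
    set R₁ : H →L[ℂ] H := (2⁻¹ : ℂ) • (T + star T) with hR₁
    set R₂ : H →L[ℂ] H := (Complex.I * 2⁻¹) • (T - star T) with hR₂
    have hR₁sa : IsSelfAdjoint R₁ := by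
      rw [IsSelfAdjoint, hR₁, star_smul, star_add, star_star]
      rw [show star (2⁻¹ : ℂ) = (2⁻¹ : ℂ) by
        rw [Complex.star_def, ← Complex.ofReal_ofNat, ← Complex.ofReal_inv, Complex.conj_ofReal]]
      rw [add_comm]
    have hR₂sa : IsSelfAdjoint R₂ := by
      rw [IsSelfAdjoint, hR₂, star_smul, star_sub, star_star]
      rw [show star (Complex.I * 2⁻¹) = -(Complex.I * 2⁻¹) by
        rw [Complex.star_def, map_mul, Complex.conj_I]
        rw [show ((starRingEnd ℂ) 2⁻¹) = (2⁻¹ : ℂ) by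
          rw [← Complex.ofReal_ofNat, ← Complex.ofReal_inv, Complex.conj_ofReal]]
        ring]
      module
    -- inner ℂ product computations
    have hinner₁ : ∀ x : H, (inner ℂ (R₁ x) x : ℂ).re = (inner ℂ (T x) x : ℂ).re := by
      intro x
      rw [hR₁]
      simp only [ContinuousLinearMap.smul_apply, ContinuousLinearMap.add_apply,
        inner_smul_left, inner_add_left]
      rw [ContinuousLinearMap.star_eq_adjoint, ContinuousLinearMap.adjoint_inner_left,
        ← inner_conj_symm x (T x), Complex.add_conj]
      rw [show ((starRingEnd ℂ) (2⁻¹ : ℂ)) = ((2⁻¹ : ℝ) : ℂ) by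
        rw [show ((2⁻¹ : ℂ)) = ((2⁻¹ : ℝ) : ℂ) by push_cast; ring, Complex.conj_ofReal]]
      rw [Complex.re_ofReal_mul, Complex.ofReal_re]
      ring
    have hinner₂ : ∀ x : H, (inner ℂ (R₂ x) x : ℂ).re = (inner ℂ (T x) x : ℂ).im := by
      intro x
      rw [hR₂]
      simp only [ContinuousLinearMap.smul_apply, ContinuousLinearMap.sub_apply,
        inner_smul_left, inner_sub_left]
      rw [ContinuousLinearMap.star_eq_adjoint, ContinuousLinearMap.adjoint_inner_left,
        ← inner_conj_symm x (T x), Complex.sub_conj]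
      rw [show ((starRingEnd ℂ) (Complex.I * 2⁻¹)) = -(Complex.I * 2⁻¹) by
        rw [map_mul, Complex.conj_I]
        rw [show ((starRingEnd ℂ) (2⁻¹ : ℂ)) = (2⁻¹ : ℂ) by
          rw [show ((2⁻¹ : ℂ)) = ((2⁻¹ : ℝ) : ℂ) by push_cast; ring, Complex.conj_ofReal]]
        ring]
      simp [Complex.mul_re, Complex.mul_im]
    -- norms of R₁ R₂ bounded by w
    have hR₁n : ‖R₁‖ ≤ w := by
      refine keyA' R₁ hR₁sa w hw0 fun x hx => ?_
      rw [hinner₁ x]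
      exact le_trans (Complex.abs_re_le_norm _) (le_trans (le_of_eq rfl) (hwle ⟨x, hx⟩))
    have hR₂n : ‖R₂‖ ≤ w := by
      refine keyA' R₂ hR₂sa w hw0 fun x hx => ?_
      rw [hinner₂ x]
      exact le_trans (Complex.abs_im_le_norm _) (hwle ⟨x, hx⟩)
    -- rewrite operator combinations
    rw [idA T, idD T]
    set A : H →L[ℂ] H := R₁ ^ 2 - R₂ ^ 2 with hA
    set S : H →L[ℂ] H := R₁ ^ 2 + R₂ ^ 2 with hS
    have hAsa : IsSelfAdjoint A := (hR₁sa.pow 2).sub (hR₂sa.pow 2)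
    have hSsa : IsSelfAdjoint S := (hR₁sa.pow 2).add (hR₂sa.pow 2)
    -- pointwise bounds
    have hptA : ∀ x : H, ‖x‖ = 1 → ‖A x‖ ^ 2 + (inner ℂ (S x) x : ℂ).re ^ 2 ≤ 4 * w ^ 4 := by
      intro x hx
      have hu : ‖R₁ (R₁ x)‖ ≤ w ^ 2 := by
        calc ‖R₁ (R₁ x)‖ ≤ ‖R₁‖ * ‖R₁ x‖ := R₁.le_opNorm _
          _ ≤ ‖R₁‖ * (‖R₁‖ * ‖x‖) := by
              have := R₁.le_opNorm x
              nlinarith [norm_nonneg (R₁ : H →L[ℂ] H), norm_nonneg (R₁ x)]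
          _ ≤ w ^ 2 := by rw [hx]; nlinarith [norm_nonneg (R₁ : H →L[ℂ] H)]
      have hv : ‖R₂ (R₂ x)‖ ≤ w ^ 2 := by
        calc ‖R₂ (R₂ x)‖ ≤ ‖R₂‖ * ‖R₂ x‖ := R₂.le_opNorm _
          _ ≤ ‖R₂‖ * (‖R₂‖ * ‖x‖) := by
              have := R₂.le_opNorm x
              nlinarith [norm_nonneg (R₂ : H →L[ℂ] H), norm_nonneg (R₂ x)]
          _ ≤ w ^ 2 := by rw [hx]; nlinarith [norm_nonneg (R₂ : H →L[ℂ] H)]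
      have hAx : A x = R₁ (R₁ x) - R₂ (R₂ x) := by
        rw [hA]; simp [pow_two, ContinuousLinearMap.mul_apply]
      have hSx : S x = R₁ (R₁ x) + R₂ (R₂ x) := by
        rw [hS]; simp [pow_two, ContinuousLinearMap.mul_apply]
      have hpar := parallelogram_law_with_norm ℂ (R₁ (R₁ x)) (R₂ (R₂ x))
      have hcs : (inner ℂ (S x) x : ℂ).re ≤ ‖S x‖ := by
        calc (inner ℂ (S x) x : ℂ).re ≤ |(inner ℂ (S x) x : ℂ).re| := le_abs_self _
          _ ≤ ‖(inner ℂ (S x) x : ℂ)‖ := Complex.abs_re_le_norm _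
          _ ≤ ‖S x‖ * ‖x‖ := norm_inner_le_norm _ _
          _ = ‖S x‖ := by rw [hx, mul_one]
      have hcs' : -(inner ℂ (S x) x : ℂ).re ≤ ‖S x‖ := by
        calc -(inner ℂ (S x) x : ℂ).re ≤ |(inner ℂ (S x) x : ℂ).re| := neg_le_abs _
          _ ≤ ‖(inner ℂ (S x) x : ℂ)‖ := Complex.abs_re_le_norm _
          _ ≤ ‖S x‖ * ‖x‖ := norm_inner_le_norm _ _
          _ = ‖S x‖ := by rw [hx, mul_one]
      have h1 : ‖A x‖ ^ 2 + ‖S x‖ ^ 2 ≤ 4 * w ^ 4 := by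
        rw [hAx, hSx]
        nlinarith [hpar, hu, hv, norm_nonneg (R₁ (R₁ x)), norm_nonneg (R₂ (R₂ x)), hw0,
          sq_nonneg (w ^ 2)]
      nlinarith [h1, hcs, hcs', norm_nonneg (S x), sq_nonneg (‖S x‖ - (inner ℂ (S x) x : ℂ).re),
        sq_nonneg (‖S x‖ + (inner ℂ (S x) x : ℂ).re)]
    -- crawford bound
    have hcrawbdd : BddBelow (Set.range fun x : {x : H // ‖x‖ = 1} =>
        (inner ℂ ((A ^ 2) x.1) x.1 : ℂ).re) := by
      refine ⟨0, ?_⟩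
      rintro - ⟨x, rfl⟩
      show (0:ℝ) ≤ (inner ℂ ((A ^ 2) x.1) x.1 : ℂ).re
      rw [sq_apply_inner A hAsa]
      positivity
    have hcraw : ∀ x : {x : H // ‖x‖ = 1}, crawford (A ^ 2) ≤ ‖A x.1‖ ^ 2 := by
      intro x
      rw [← sq_apply_inner A hAsa]
      exact ciInf_le hcrawbdd x
    -- nonnegativity of the S quadratic form
    have hSnn : ∀ x : H, 0 ≤ (inner ℂ (S x) x : ℂ).re := by
      intro x
      have : (inner ℂ (S x) x : ℂ).re = ‖R₁ x‖ ^ 2 + ‖R₂ x‖ ^ 2 := by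
        rw [hS]
        simp only [ContinuousLinearMap.add_apply, inner_add_left, Complex.add_re]
        rw [sq_apply_inner R₁ hR₁sa, sq_apply_inner R₂ hR₂sa]
      rw [this]; positivity
    -- main estimate
    set C : ℝ := 4 * w ^ 4 - crawford (A ^ 2) with hC
    have hC0 : 0 ≤ C := by
      have h1 := hptA x₀ hx₀
      have h2 := hcraw ⟨x₀, hx₀⟩
      have h3 := hSnn x₀
      simp only [hC]
      nlinarith [sq_nonneg ((inner ℂ (S x₀) x₀ : ℂ).re)]
    have hSbound : ‖S‖ ≤ Real.sqrt C := by
      refine keyA' S hSsa _ (Real.sqrt_nonneg C) fun x hx => ?_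
      rw [abs_of_nonneg (hSnn x)]
      have h1 := hptA x hx
      have h2 := hcraw ⟨x, hx⟩
      have hsq : (inner ℂ (S x) x : ℂ).re ^ 2 ≤ C := by simp only [hC]; nlinarith
      calc (inner ℂ (S x) x : ℂ).re = Real.sqrt ((inner ℂ (S x) x : ℂ).re ^ 2) := by
            rw [Real.sqrt_sq (hSnn x)]
        _ ≤ Real.sqrt C := Real.sqrt_le_sqrt hsq
    have hDnorm : ‖(2 : ℂ) • S‖ ^ 2 ≤ 4 * C := by
      rw [norm_smul]
      have h2 : ‖(2 : ℂ)‖ = 2 := by simp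
      rw [h2]
      have := Real.sq_sqrt hC0
      nlinarith [hSbound, Real.sqrt_nonneg C, norm_nonneg (S : H →L[ℂ] H)]
    simp only [hC] at hDnorm
    linarith
end
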